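/- arXiv:2204.11429 — 5 statements merged into one kernel-verified Lean document; each statement's English description precedes it below -/
import Mathlib

section
/- Let F be a translation + invariant Furstenberg family on ℕ. If A ⊆ ℕ is an essential F-set, then there exist a compact metric space X, a homeomorphism T : X → X, points x, y ∈ X and a neighborhood U of y such that x is F-strongly proximal to y and N((x,y),U×U) ⊆ A (that is, A is an essential F-set via an invertible dynamical system). -/
open Set Filter Topology

attribute [local instance] Ultrafilter.add

/-- The nonhomogeneous spectrum function `g_{α,γ}(n) = ⌊nα + γ⌋`. -/
noncomputable def gFun (α γ : ℝ) (n : ℕ) : ℕ := (⌊(n : ℝ) * α + γ⌋).toNat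

/-- The image `g_{α,γ}(A) = {⌊nα + γ⌋ : n ∈ A}` of a set `A ⊆ ℕ` under the spectrum map. -/
noncomputable def gImage (α γ : ℝ) (A : Set ℕ) : Set ℕ := gFun α γ '' A

/-- A Furstenberg family: a nonempty collection of nonempty subsets of ℕ (the positive
integers), hereditary upwards. -/
def IsFurstenbergFamily (F : Set (Set ℕ)) : Prop :=
  F.Nonempty ∧ (∀ A ∈ F, A.Nonempty) ∧ ∀ A B : Set ℕ, A ∈ F → A ⊆ B → B ∈ F

/-- Translation `+` invariance of a family. -/
def TranslationInvariant (F : Set (Set ℕ)) : Prop :=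
  ∀ n : ℕ, ∀ A ∈ F, (fun m => n + m) '' A ∈ F

/-- The Ramsey property of a family. -/
def HasRamseyProperty (F : Set (Set ℕ)) : Prop :=
  ∀ A B : Set ℕ, A ∪ B ∈ F → A ∈ F ∨ B ∈ F

/-- `N((x,y), U×U) = {n ∈ ℕ : Tⁿx ∈ U and Tⁿy ∈ U}` (ℕ being the positive integers). -/
def retTimes2 {X : Type*} (T : X → X) (x y : X) (U : Set X) : Set ℕ :=
  {n : ℕ | 0 < n ∧ T^[n] x ∈ U ∧ T^[n] y ∈ U}

/-- `N(x, U) = {n ∈ ℕ : Tⁿx ∈ U}` (ℕ being the positive integers). -/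
def retTimes1 {X : Type*} (T : X → X) (x : X) (U : Set X) : Set ℕ :=
  {n : ℕ | 0 < n ∧ T^[n] x ∈ U}

/-- `x` is `F`-strongly proximal to `y`: for every neighborhood `U` of `y`,
`N((x,y),U×U) ∈ F`. -/
def StronglyProximal {X : Type*} [TopologicalSpace X] (F : Set (Set ℕ))
    (T : X → X) (x y : X) : Prop :=
  ∀ U ∈ nhds y, retTimes2 T x y U ∈ F

/-- `A` is an essential `F`-set: witnessed by a dynamical system (compact metric space with a
continuous self-map), a pair of points `x` `F`-strongly proximal to `y`, and a neighborhood
`U` of `y` with `N((x,y),U×U) ⊆ A`. -/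
def IsEssentialSet (F : Set (Set ℕ)) (A : Set ℕ) : Prop :=
  ∃ (X : Type) (_ : MetricSpace X) (_ : CompactSpace X) (T : X → X),
    Continuous T ∧ ∃ x y : X, StronglyProximal F T x y ∧
      ∃ U ∈ nhds y, retTimes2 T x y U ⊆ A

/-- The return-time set of the pair `((x,γ),(y,γ))` to the neighborhood `U × (γ-ε, γ+ε)`
in the suspension `(Y, F_{α⁻¹})`, expressed on the base:
`{n : F_{α⁻¹}ⁿ(x,γ) ∈ U × (γ-ε,γ+ε) and F_{α⁻¹}ⁿ(y,γ) ∈ U × (γ-ε,γ+ε)}`, where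
`F_{α⁻¹}ⁿ(x,t) = (T^{⌊n/α+t⌋}x, n/α+t-⌊n/α+t⌋)`. -/
noncomputable def suspRet {X : Type*} (T : X → X) (x y : X) (U : Set X)
    (α γ ε : ℝ) : Set ℕ :=
  {n : ℕ | 0 < n ∧ T^[(⌊(n : ℝ) / α + γ⌋).toNat] x ∈ U ∧
    T^[(⌊(n : ℝ) / α + γ⌋).toNat] y ∈ U ∧
    γ - ε < (n : ℝ) / α + γ - ⌊(n : ℝ) / α + γ⌋ ∧
    (n : ℝ) / α + γ - ⌊(n : ℝ) / α + γ⌋ < γ + ε}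

/-- The pair `(x,y)` has the `F`-suspension-proximality property at level `γ` for the
suspension `(Y, F_{α⁻¹})` of `(X,T)`: for every neighborhood `U` of `y` and every
`0 < ε < min{γ, 1-γ}`, the corresponding return-time set in the suspension belongs to `F`
(i.e. `(x,γ)` is `F`-strongly proximal to `(y,γ)` in `(Y, F_{α⁻¹})`). -/
def SuspensionProximal {X : Type*} [TopologicalSpace X] (F : Set (Set ℕ))
    (T : X → X) (x y : X) (α γ : ℝ) : Prop :=
  ∀ U ∈ nhds y, ∀ ε : ℝ, 0 < ε → ε < min γ (1 - γ) → suspRet T x y U α γ ε ∈ F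

/-- `A ⊆ ℕ` is an IP-set. -/
def IsIPSet (A : Set ℕ) : Prop :=
  ∃ p : ℕ → ℕ, (∀ n, 0 < p n) ∧ ∀ s : Finset ℕ, s.Nonempty → ∑ n ∈ s, p n ∈ A

/-- `A ⊆ ℕ` is an AP-set: it contains arbitrarily long arithmetic progressions. -/
def IsAPSet (A : Set ℕ) : Prop :=
  ∀ m : ℕ, ∃ a b : ℕ, 0 < a ∧ 0 < b ∧ ∀ k < m, a + k * b ∈ A

/-- `A ⊆ ℕ` is a J-set. -/
def IsJSet (A : Set ℕ) : Prop :=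
  ∀ (m : ℕ) (p : Fin m → ℕ → ℕ), (∀ i n, 0 < p i n) →
    ∃ r : ℕ, 0 < r ∧ ∃ s : Finset ℕ, s.Nonempty ∧ ∀ i : Fin m, r + ∑ n ∈ s, p i n ∈ A

/-- `A ⊆ ℕ` is piecewise syndetic: for some `ℓ`, the union `⋃_{i=0}^{ℓ} (A−i)` contains
arbitrarily long intervals of consecutive integers. -/
def IsPiecewiseSyndetic (A : Set ℕ) : Prop :=
  ∃ l : ℕ, ∀ m : ℕ, ∃ n : ℕ, 0 < n ∧ ∀ k, n ≤ k → k ≤ n + m → ∃ i ≤ l, k + i ∈ A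

/-- The upper density `d*(A) = limsup_{n→∞} |A ∩ [1,n]| / n`. -/
noncomputable def upperDensity (A : Set ℕ) : ℝ :=
  Filter.limsup (fun n : ℕ => ((A ∩ Set.Icc 1 n).ncard : ℝ) / n) Filter.atTop

/-- The upper Banach density
`BD*(A) = limsup_{(n−m)→∞} |A ∩ [m,n]| / (n−m+1) = limsup_{L→∞} sup_m |A ∩ [m,m+L]| / (L+1)`. -/
noncomputable def upperBanachDensity (A : Set ℕ) : ℝ :=
  Filter.limsup (fun L : ℕ =>
    ⨆ m : ℕ, ((A ∩ Set.Icc m (m + L)).ncard : ℝ) / (L + 1)) Filter.atTop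

/-- `A ⊆ ℕ` is a C-set: a member of an idempotent ultrafilter all of whose members are
J-sets. -/
def IsCSet (A : Set ℕ) : Prop :=
  ∃ p : Ultrafilter ℕ, p + p = p ∧ (∀ B ∈ p, IsJSet B) ∧ A ∈ p

/-- `A ⊆ ℕ` is a D-set: a member of an idempotent ultrafilter all of whose members have
positive upper Banach density. -/
def IsDSet (A : Set ℕ) : Prop :=
  ∃ p : Ultrafilter ℕ, p + p = p ∧ (∀ B ∈ p, 0 < upperBanachDensity B) ∧ A ∈ p

/-- `A ⊆ ℕ` is a quasi-central set: a member of an idempotent ultrafilter all of whose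
members are piecewise syndetic. -/
def IsQuasiCentralSet (A : Set ℕ) : Prop :=
  ∃ p : Ultrafilter ℕ, p + p = p ∧ (∀ B ∈ p, IsPiecewiseSyndetic B) ∧ A ∈ p

/-- The dual family `ess*(F)` of the family of essential `F`-sets. -/
def essDual (F : Set (Set ℕ)) : Set (Set ℕ) :=
  {B : Set ℕ | ∀ A : Set ℕ, IsEssentialSet F A → (B ∩ A).Nonempty}
namespace EssLem33

set_option linter.unusedSectionVars false

variable {Z : Type} [MetricSpace Z] [CompactSpace Z]

/-- the "history" map on one-sided sequence space: prepend `g (w 0)`. -/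
def hist (g : Z → Z) (w : ℕ → Z) : ℕ → Z := fun i =>
  match i with
  | 0 => g (w 0)
  | (j+1) => w j

/-- left shift -/
def shif (w : ℕ → Z) : ℕ → Z := fun i => w (i + 1)

/-- the inverse limit set -/
def Xhat (g : Z → Z) : Set (ℕ → Z) := {w | ∀ i, g (w (i + 1)) = w i}

/-- the padded history of the forward orbit of `a` at time `m` -/
def pad (g : Z → Z) (a : Z) (m : ℕ) : ℕ → Z := fun i => g^[m - i] a

noncomputable def th (m : ℕ) : ℝ := 1 / (m + 2)

lemma th_pos (m : ℕ) : 0 < th m := by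
  unfold th; positivity

lemma th_lt_th {k l : ℕ} (h : k < l) : th l < th k := by
  unfold th
  apply one_div_lt_one_div_of_lt (by positivity)
  have : (k:ℝ) < l := by exact_mod_cast h
  linarith

lemma th_le_th {k l : ℕ} (h : k ≤ l) : th l ≤ th k := by
  rcases eq_or_lt_of_le h with rfl | h
  · exact le_refl _
  · exact (th_lt_th h).le

lemma th_injective : Function.Injective th := by
  intro k l h
  by_contra hne
  rcases lt_or_gt_of_ne hne with hlt | hlt
  · exact (ne_of_gt (th_lt_th hlt)) h
  · exact (ne_of_gt (th_lt_th hlt)) h.symm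

lemma th_tendsto : Tendsto th atTop (𝓝 0) := by
  have : Tendsto (fun n : ℕ => 1 / ((n:ℝ) + 1)) atTop (𝓝 0) :=
    tendsto_one_div_add_atTop_nhds_zero_nat
  have h2 : Tendsto (fun n : ℕ => n + 1) atTop atTop := tendsto_add_atTop_nat 1
  have h3 := this.comp h2
  have : th = (fun n : ℕ => 1 / ((n:ℝ) + 1)) ∘ (fun n => n + 1) := by
    funext n
    show th n = 1 / (((n+1 : ℕ):ℝ) + 1)
    unfold th
    push_cast
    ring_nf
  rw [this]
  exact h3

lemma th_ne_zero (m : ℕ) : th m ≠ 0 := (th_pos m).ne'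

lemma hist_cont {g : Z → Z} (hg : Continuous g) : Continuous (hist g) := by
  apply continuous_pi
  intro i
  match i with
  | 0 => exact hg.comp (continuous_apply 0)
  | (j+1) => exact continuous_apply j

lemma hist_injective (g : Z → Z) : Function.Injective (hist g) := by
  intro w w' h
  funext i
  have := congrFun h (i + 1)
  exact this

lemma hist_mem_Xhat {g : Z → Z} {w : ℕ → Z} (hw : w ∈ Xhat g) : hist g w ∈ Xhat g := by
  intro i
  match i with
  | 0 => rfl
  | (j+1) => exact hw j

lemma shif_mem_Xhat {g : Z → Z} {w : ℕ → Z} (hw : w ∈ Xhat g) : shif w ∈ Xhat g := by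
  intro i; exact hw (i+1)

lemma shif_iter_apply (k : ℕ) (w : ℕ → Z) (i : ℕ) : shif^[k] w i = w (i + k) := by
  induction k generalizing w i with
  | zero => rfl
  | succ k ih =>
    rw [Function.iterate_succ_apply, ih]
    rfl

lemma shif_iter_mem_Xhat {g : Z → Z} {w : ℕ → Z} (hw : w ∈ Xhat g) (k : ℕ) :
    shif^[k] w ∈ Xhat g := by
  intro i
  rw [shif_iter_apply, shif_iter_apply]
  have := hw (i + k)
  convert this using 3
  omega

lemma hist_shif {g : Z → Z} {w : ℕ → Z} (hw : w ∈ Xhat g) : hist g (shif w) = w := by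
  funext i
  match i with
  | 0 => exact hw 0
  | (j+1) => rfl

lemma hist_pad (g : Z → Z) (a : Z) (m : ℕ) : hist g (pad g a m) = pad g a (m+1) := by
  funext i
  match i with
  | 0 =>
    show g (g^[m - 0] a) = g^[m+1-0] a
    simp [Function.iterate_succ_apply' g m a]
  | (j+1) =>
    show g^[m - j] a = g^[m + 1 - (j+1)] a
    congr 1
    omega

lemma hist_iter_apply (g : Z → Z) (n : ℕ) (w : ℕ → Z) (i : ℕ) (hi : i ≤ n) :
    (hist g)^[n] w i = g^[n - i] (w 0) := by
  induction n generalizing i with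
  | zero =>
    interval_cases i
    rfl
  | succ n ih =>
    rw [Function.iterate_succ_apply']
    match i with
    | 0 =>
      show g ((hist g)^[n] w 0) = g^[n+1-0] (w 0)
      rw [ih 0 (Nat.zero_le n)]
      simp [Function.iterate_succ_apply' g n (w 0)]
    | (j+1) =>
      show (hist g)^[n] w j = _
      rw [ih j (by omega)]
      congr 1
      omega

lemma pad_rel (g : Z → Z) (b : Z) {m i : ℕ} (h : i + 1 ≤ m) :
    g (pad g b m (i+1)) = pad g b m i := by
  show g (g^[m - (i+1)] b) = g^[m - i] b
  have : m - i = (m - (i+1)) + 1 := by omega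
  rw [this, Function.iterate_succ_apply']

noncomputable def phiP (s : ℝ) : ℝ := s / (1 + |s|)
noncomputable def phiM (t : ℝ) : ℝ := t / (1 - min t (1/2))

lemma phiP_zero : phiP 0 = 0 := by unfold phiP; simp
lemma phiM_zero : phiM 0 = 0 := by unfold phiM; simp

lemma phiP_cont : Continuous phiP := by
  apply Continuous.div continuous_id (by continuity)
  intro s
  have : 0 ≤ |s| := abs_nonneg s
  intro h; linarith [abs_nonneg s, h]

lemma phiM_denom_pos (t : ℝ) : 0 < 1 - min t (1/2) := by
  have : min t (1/2) ≤ 1/2 := min_le_right _ _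
  linarith

lemma phiM_cont : Continuous phiM := by
  apply Continuous.div continuous_id (by continuity)
  intro t
  exact (phiM_denom_pos t).ne'

lemma th_le_half (m : ℕ) : th m ≤ 1/2 := by
  unfold th
  rw [div_le_div_iff₀ (by positivity) (by norm_num)]
  have : (0:ℝ) ≤ m := Nat.cast_nonneg m
  linarith

lemma phiP_th (m : ℕ) : phiP (th m) = th (m+1) := by
  unfold phiP th
  rw [abs_of_pos (by positivity)]
  have h1 : ((m:ℝ) + 2) ≠ 0 := by positivity
  have h2 : ((m+1:ℕ):ℝ) + 2 = (m:ℝ) + 3 := by push_cast; ring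
  rw [h2]
  have h3 : (m:ℝ) + 3 ≠ 0 := by positivity
  field_simp
  ring

lemma phiM_th (k : ℕ) : phiM (th (k+1)) = th k := by
  unfold phiM
  have hle : th (k+1) ≤ 1/2 := th_le_half _
  rw [min_eq_left hle]
  unfold th
  have h2 : ((k+1:ℕ):ℝ) + 2 = (k:ℝ) + 3 := by push_cast; ring
  rw [h2]
  have h3 : (k:ℝ) + 3 ≠ 0 := by positivity
  have h4 : (k:ℝ) + 2 ≠ 0 := by positivity
  have h5 : 1 - 1/((k:ℝ)+3) = ((k:ℝ)+2)/((k:ℝ)+3) := by field_simp; ring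
  rw [h5]
  field_simp


section Chunk3
variable {Z : Type} [MetricSpace Z] [CompactSpace Z]

variable (g : Z → Z) (a : Z) (v : ℕ → Z)

/-- forward orbit points of the suspension -/
noncomputable def pA (m : ℕ) : (ℕ → Z) × ℝ × ℝ := (pad g a m, th m, 0)

/-- backward spiral points -/
noncomputable def pB (k : ℕ) : (ℕ → Z) × ℝ × ℝ := (shif^[k+1] v, 0, th k)

/-- the inverse-limit part -/
def S3 : Set ((ℕ → Z) × ℝ × ℝ) := (Xhat g) ×ˢ (({0} : Set ℝ) ×ˢ ({0} : Set ℝ))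

/-- the whole space -/
noncomputable def Yset : Set ((ℕ → Z) × ℝ × ℝ) :=
  (range (pA g a) ∪ range (pB v)) ∪ S3 g

noncomputable def Gmap : ((ℕ → Z) × ℝ × ℝ) → ((ℕ → Z) × ℝ × ℝ) :=
  fun p => (hist g p.1, phiP p.2.1, phiM p.2.2)

open Classical in
noncomputable def Tval : ((ℕ → Z) × ℝ × ℝ) → ((ℕ → Z) × ℝ × ℝ) :=
  fun p => if p.2.2 = th 0 then pA g a 0 else Gmap g p

lemma Gmap_cont (hg : Continuous g) : Continuous (Gmap g) := by
  unfold Gmap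
  exact Continuous.prodMk ((hist_cont hg).comp continuous_fst)
    (Continuous.prodMk (phiP_cont.comp (continuous_fst.comp continuous_snd))
      (phiM_cont.comp (continuous_snd.comp continuous_snd)))

lemma mem_S3_iff (p : (ℕ → Z) × ℝ × ℝ) :
    p ∈ S3 g ↔ p.1 ∈ Xhat g ∧ p.2.1 = 0 ∧ p.2.2 = 0 := by
  unfold S3
  rw [Set.mem_prod, Set.mem_prod]
  simp

lemma Gmap_pA (m : ℕ) : Gmap g (pA g a m) = pA g a (m+1) := by
  unfold Gmap pA
  simp only
  rw [hist_pad, phiP_th]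
  show _ = (_, th (m+1), (0:ℝ))
  rw [phiM_zero]

lemma Gmap_pB (hv : v ∈ Xhat g) (k : ℕ) : Gmap g (pB v (k+1)) = pB v k := by
  unfold Gmap pB
  simp only
  rw [phiP_zero, phiM_th]
  congr 1
  show hist g (shif^[k+1+1] v) = shif^[k+1] v
  rw [Function.iterate_succ_apply']
  exact hist_shif (shif_iter_mem_Xhat hv (k+1))

lemma Gmap_S3 {p : (ℕ → Z) × ℝ × ℝ} (hp : p ∈ S3 g) : Gmap g p ∈ S3 g := by
  rw [mem_S3_iff] at hp ⊢
  obtain ⟨h1, h2, h3⟩ := hp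
  refine ⟨hist_mem_Xhat h1, ?_, ?_⟩
  · show phiP p.2.1 = 0; rw [h2, phiP_zero]
  · show phiM p.2.2 = 0; rw [h3, phiM_zero]

lemma pA_snd (m : ℕ) : (pA g a m).2.1 = th m := rfl
lemma pA_trd (m : ℕ) : (pA g a m).2.2 = 0 := rfl
lemma pB_snd (k : ℕ) : (pB v k).2.1 = 0 := rfl
lemma pB_trd (k : ℕ) : (pB v k).2.2 = th k := rfl

lemma pA_injective : Function.Injective (pA g a) := by
  intro m m' h
  exact th_injective (congrArg (fun p => p.2.1) h)

lemma pB_injective : Function.Injective (pB v) := by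
  intro m m' h
  exact th_injective (congrArg (fun p => p.2.2) h)

lemma Tval_pA (m : ℕ) : Tval g a (pA g a m) = pA g a (m+1) := by
  unfold Tval
  rw [if_neg, Gmap_pA]
  rw [pA_trd]
  exact (th_ne_zero 0).symm

lemma Tval_pB0 : Tval g a (pB v 0) = pA g a 0 := by
  unfold Tval
  rw [if_pos (pB_trd v 0)]

lemma Tval_pBsucc (hv : v ∈ Xhat g) (k : ℕ) : Tval g a (pB v (k+1)) = pB v k := by
  unfold Tval
  rw [if_neg, Gmap_pB _ _ hv]
  rw [pB_trd]
  exact fun h => Nat.succ_ne_zero k (th_injective h)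

lemma Tval_S3 {p : (ℕ → Z) × ℝ × ℝ} (hp : p ∈ S3 g) : Tval g a p = Gmap g p := by
  unfold Tval
  rw [if_neg]
  rw [(mem_S3_iff g p).1 hp |>.2.2]
  exact (th_ne_zero 0).symm

lemma Tval_mem (hv : v ∈ Xhat g) {p : (ℕ → Z) × ℝ × ℝ} (hp : p ∈ Yset g a v) :
    Tval g a p ∈ Yset g a v := by
  rcases hp with (⟨m, rfl⟩ | ⟨k, rfl⟩) | hp
  · rw [Tval_pA]; exact Or.inl (Or.inl ⟨m+1, rfl⟩)
  · match k with
    | 0 => rw [Tval_pB0]; exact Or.inl (Or.inl ⟨0, rfl⟩)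
    | (k+1) => rw [Tval_pBsucc _ _ _ hv]; exact Or.inl (Or.inr ⟨k, rfl⟩)
  · rw [Tval_S3 _ _ hp]; exact Or.inr (Gmap_S3 _ hp)

end Chunk3

section Chunk4
variable {Z : Type} [MetricSpace Z] [CompactSpace Z]
variable (g : Z → Z) (a : Z) (v : ℕ → Z)

lemma Xhat_closed (hg : Continuous g) : IsClosed (Xhat g) := by
  have : Xhat g = ⋂ i, {w : ℕ → Z | g (w (i+1)) = w i} := by
    ext w; simp [Xhat, Set.mem_iInter]
  rw [this]
  exact isClosed_iInter fun i =>
    isClosed_eq (hg.comp (continuous_apply (i+1))) (continuous_apply i)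

lemma S3_compact (hg : Continuous g) : IsCompact (S3 g) :=
  ((Xhat_closed g hg).isCompact).prod (isCompact_singleton.prod isCompact_singleton)

lemma bigK_compact : IsCompact ((univ : Set (ℕ → Z)) ×ˢ (Icc (0:ℝ) 1 ×ˢ Icc (0:ℝ) 1)) :=
  isCompact_univ.prod (isCompact_Icc.prod isCompact_Icc)

lemma bigK_closed : IsClosed ((univ : Set (ℕ → Z)) ×ˢ (Icc (0:ℝ) 1 ×ˢ Icc (0:ℝ) 1)) :=
  isClosed_univ.prod (isClosed_Icc.prod isClosed_Icc)

lemma th_mem_Icc (m : ℕ) : th m ∈ Icc (0:ℝ) 1 :=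
  ⟨(th_pos m).le, le_trans (th_le_half m) (by norm_num)⟩

lemma fibers_tendsto_atTop {ms : ℕ → ℕ} (h : ∀ m, ¬ {n | ms n = m}.Infinite) :
    Tendsto ms atTop atTop := by
  rw [tendsto_atTop]
  intro M
  have hfin : {n | ms n < M}.Finite := by
    have hsub : {n | ms n < M} ⊆ ⋃ m ∈ Finset.range M, {n | ms n = m} := by
      intro n hn
      simp only [Set.mem_iUnion, Finset.mem_range]
      exact ⟨ms n, hn, rfl⟩
    refine Set.Finite.subset ?_ hsub
    exact Set.Finite.biUnion (Finset.range M).finite_toSet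
      (fun m _ => Set.not_infinite.mp (h m))
  have := hfin.eventually_cofinite_notMem
  rw [Nat.cofinite_eq_atTop] at this
  exact this.mono fun n hn => not_lt.mp hn

lemma const_along_infinite_fiber {X : Type*} [TopologicalSpace X] [T2Space X]
    {u : ℕ → X} {q c : X} (hconv : Tendsto u atTop (𝓝 q))
    {s : Set ℕ} (hs : s.Infinite) (hc : ∀ n ∈ s, u n = c) : q = c := by
  have hne : (atTop ⊓ 𝓟 s).NeBot := by
    have : ∃ᶠ n in atTop, n ∈ s := Nat.frequently_atTop_iff_infinite.mpr hs
    exact Filter.frequently_iff_neBot.mp this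
  have h1 : Tendsto u (atTop ⊓ 𝓟 s) (𝓝 q) := hconv.mono_left inf_le_left
  have h2 : Tendsto u (atTop ⊓ 𝓟 s) (𝓝 c) := by
    refine Tendsto.congr' ?_ tendsto_const_nhds
    exact eventually_inf_principal.mpr (Eventually.of_forall fun n hn => (hc n hn).symm)
  exact tendsto_nhds_unique h1 h2

lemma closure_pA_sub (hg : Continuous g) :
    closure (range (pA g a)) ⊆ range (pA g a) ∪ S3 g := by
  intro q hq
  rw [mem_closure_iff_seq_limit] at hq
  obtain ⟨u, hu, hconv⟩ := hq
  choose ms hms using hu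
  by_cases hinf : ∃ m, {n | ms n = m}.Infinite
  · obtain ⟨m, hm⟩ := hinf
    left
    refine ⟨m, (const_along_infinite_fiber hconv hm ?_).symm⟩
    intro n hn
    rw [← hms n, hn]
  · push_neg at hinf
    have hmt : Tendsto ms atTop atTop := fibers_tendsto_atTop (fun m => Set.not_infinite.mpr (hinf m))
    right
    rw [mem_S3_iff]
    have hcoord : ∀ j, Tendsto (fun n => (u n).1 j) atTop (𝓝 (q.1 j)) := fun j =>
      (((continuous_apply j).comp continuous_fst).tendsto q).comp hconv
    refine ⟨?_, ?_, ?_⟩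
    · intro i
      have hL : Tendsto (fun n => g ((u n).1 (i+1))) atTop (𝓝 (g (q.1 (i+1)))) :=
        (hg.tendsto _).comp (hcoord (i+1))
      have hEq : (fun n => g ((u n).1 (i+1))) =ᶠ[atTop] (fun n => (u n).1 i) := by
        filter_upwards [hmt.eventually_ge_atTop (i+1)] with n hn
        rw [← hms n]
        exact pad_rel g a hn
      have hL' : Tendsto (fun n => (u n).1 i) atTop (𝓝 (g (q.1 (i+1)))) := hL.congr' hEq
      exact tendsto_nhds_unique hL' (hcoord i)
    · have h1 : Tendsto (fun n => (u n).2.1) atTop (𝓝 q.2.1) :=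
        ((continuous_fst.comp continuous_snd).tendsto q).comp hconv
      have h2 : Tendsto (fun n => (u n).2.1) atTop (𝓝 0) := by
        have : (fun n => (u n).2.1) = fun n => th (ms n) := by
          funext n; rw [← hms n]; rfl
        rw [this]
        exact th_tendsto.comp hmt
      exact tendsto_nhds_unique h1 h2
    · have h1 : Tendsto (fun n => (u n).2.2) atTop (𝓝 q.2.2) :=
        ((continuous_snd.comp continuous_snd).tendsto q).comp hconv
      have h2 : Tendsto (fun n => (u n).2.2) atTop (𝓝 0) := by
        have : (fun n => (u n).2.2) = fun _ => (0:ℝ) := by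
          funext n; rw [← hms n]; rfl
        rw [this]
        exact tendsto_const_nhds
      exact tendsto_nhds_unique h1 h2

lemma closure_pB_sub (hg : Continuous g) (hv : v ∈ Xhat g) :
    closure (range (pB v)) ⊆ range (pB v) ∪ S3 g := by
  intro q hq
  rw [mem_closure_iff_seq_limit] at hq
  obtain ⟨u, hu, hconv⟩ := hq
  choose ms hms using hu
  by_cases hinf : ∃ m, {n | ms n = m}.Infinite
  · obtain ⟨m, hm⟩ := hinf
    left
    refine ⟨m, (const_along_infinite_fiber hconv hm ?_).symm⟩
    intro n hn
    rw [← hms n, hn]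
  · push_neg at hinf
    have hmt : Tendsto ms atTop atTop := fibers_tendsto_atTop (fun m => Set.not_infinite.mpr (hinf m))
    right
    rw [mem_S3_iff]
    have hcoord : ∀ j, Tendsto (fun n => (u n).1 j) atTop (𝓝 (q.1 j)) := fun j =>
      (((continuous_apply j).comp continuous_fst).tendsto q).comp hconv
    refine ⟨?_, ?_, ?_⟩
    · intro i
      have hL : Tendsto (fun n => g ((u n).1 (i+1))) atTop (𝓝 (g (q.1 (i+1)))) :=
        (hg.tendsto _).comp (hcoord (i+1))
      have hEq : (fun n => g ((u n).1 (i+1))) = (fun n => (u n).1 i) := by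
        funext n
        rw [← hms n]
        exact shif_iter_mem_Xhat hv (ms n + 1) i
      rw [hEq] at hL
      exact tendsto_nhds_unique hL (hcoord i)
    · have h1 : Tendsto (fun n => (u n).2.1) atTop (𝓝 q.2.1) :=
        ((continuous_fst.comp continuous_snd).tendsto q).comp hconv
      have h2 : (fun n => (u n).2.1) = fun _ => (0:ℝ) := by
        funext n; rw [← hms n]; rfl
      rw [h2] at h1
      exact tendsto_nhds_unique h1 tendsto_const_nhds
    · have h1 : Tendsto (fun n => (u n).2.2) atTop (𝓝 q.2.2) :=
        ((continuous_snd.comp continuous_snd).tendsto q).comp hconv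
      have h2 : Tendsto (fun n => (u n).2.2) atTop (𝓝 0) := by
        have : (fun n => (u n).2.2) = fun n => th (ms n) := by
          funext n; rw [← hms n]; rfl
        rw [this]
        exact th_tendsto.comp hmt
      exact tendsto_nhds_unique h1 h2

lemma Yset_compact (hg : Continuous g) (hv : v ∈ Xhat g) : IsCompact (Yset g a v) := by
  have hsubA : range (pA g a) ⊆ (univ : Set (ℕ → Z)) ×ˢ (Icc (0:ℝ) 1 ×ˢ Icc (0:ℝ) 1) := by
    rintro p ⟨m, rfl⟩
    refine ⟨mem_univ _, th_mem_Icc m, ?_⟩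
    show (0:ℝ) ∈ Icc (0:ℝ) 1
    constructor <;> norm_num
  have hsubB : range (pB v) ⊆ (univ : Set (ℕ → Z)) ×ˢ (Icc (0:ℝ) 1 ×ˢ Icc (0:ℝ) 1) := by
    rintro p ⟨k, rfl⟩
    refine ⟨mem_univ _, ?_, th_mem_Icc k⟩
    show (0:ℝ) ∈ Icc (0:ℝ) 1
    constructor <;> norm_num
  have hA : IsCompact (closure (range (pA g a))) :=
    bigK_compact.of_isClosed_subset isClosed_closure (closure_minimal hsubA bigK_closed)
  have hB : IsCompact (closure (range (pB v))) :=
    bigK_compact.of_isClosed_subset isClosed_closure (closure_minimal hsubB bigK_closed)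
  have heq : Yset g a v = (closure (range (pA g a)) ∪ closure (range (pB v))) ∪ S3 g := by
    apply Subset.antisymm
    · exact union_subset_union (union_subset_union subset_closure subset_closure) Subset.rfl
    · apply union_subset
      · apply union_subset
        · intro q hq
          rcases closure_pA_sub g a hg hq with h | h
          · exact Or.inl (Or.inl h)
          · exact Or.inr h
        · intro q hq
          rcases closure_pB_sub g v hg hv hq with h | h
          · exact Or.inl (Or.inr h)
          · exact Or.inr h
      · exact subset_union_right
  rw [heq]
  exact (hA.union hB).union (S3_compact g hg)

end Chunk4

section Chunk5
variable {Z : Type} [MetricSpace Z] [CompactSpace Z]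
variable (g : Z → Z) (a : Z) (v : ℕ → Z)

lemma Yset_cases {p : (ℕ → Z) × ℝ × ℝ} (hp : p ∈ Yset g a v) :
    (∃ m, p = pA g a m) ∨ (∃ k, p = pB v k) ∨ p ∈ S3 g := by
  rcases hp with (⟨m, rfl⟩ | ⟨k, rfl⟩) | hp
  · exact Or.inl ⟨m, rfl⟩
  · exact Or.inr (Or.inl ⟨k, rfl⟩)
  · exact Or.inr (Or.inr hp)

lemma pA_mem (m : ℕ) : pA g a m ∈ Yset g a v := Or.inl (Or.inl ⟨m, rfl⟩)
lemma pB_mem (k : ℕ) : pB v k ∈ Yset g a v := Or.inl (Or.inr ⟨k, rfl⟩)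
lemma S3_sub : S3 g ⊆ Yset g a v := fun _ h => Or.inr h

noncomputable def Tmap (hv : v ∈ Xhat g) : ↥(Yset g a v) → ↥(Yset g a v) :=
  fun p => ⟨Tval g a p.1, Tval_mem g a v hv p.2⟩

variable (hv : v ∈ Xhat g)

noncomputable def mkA (m : ℕ) : ↥(Yset g a v) := ⟨pA g a m, pA_mem g a v m⟩
noncomputable def mkB (k : ℕ) : ↥(Yset g a v) := ⟨pB v k, pB_mem g a v k⟩
noncomputable def mkC (w : ℕ → Z) (hw : w ∈ Xhat g) : ↥(Yset g a v) :=
  ⟨(w, 0, 0), S3_sub g a v ((mem_S3_iff g _).mpr ⟨hw, rfl, rfl⟩)⟩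

lemma Tmap_mkA (m : ℕ) : Tmap g a v hv (mkA g a v m) = mkA g a v (m+1) :=
  Subtype.ext (Tval_pA g a m)

lemma Tmap_iter_mkA (n : ℕ) : (Tmap g a v hv)^[n] (mkA g a v 0) = mkA g a v n := by
  induction n with
  | zero => rfl
  | succ n ih => rw [Function.iterate_succ_apply', ih, Tmap_mkA]

lemma Tmap_mkC (w : ℕ → Z) (hw : w ∈ Xhat g) :
    Tmap g a v hv (mkC g a v w hw) = mkC g a v (hist g w) (hist_mem_Xhat hw) := by
  apply Subtype.ext
  show Tval g a (w, 0, 0) = (hist g w, 0, 0)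
  rw [Tval_S3 g a ((mem_S3_iff g _).mpr ⟨hw, rfl, rfl⟩)]
  show (hist g w, phiP 0, phiM 0) = (hist g w, 0, 0)
  rw [phiP_zero, phiM_zero]

lemma hist_iter_mem {w : ℕ → Z} (hw : w ∈ Xhat g) (n : ℕ) : (hist g)^[n] w ∈ Xhat g := by
  induction n with
  | zero => exact hw
  | succ n ih => rw [Function.iterate_succ_apply']; exact hist_mem_Xhat ih

lemma Tmap_iter_mkC (w : ℕ → Z) (hw : w ∈ Xhat g) (n : ℕ) :
    (Tmap g a v hv)^[n] (mkC g a v w hw) = mkC g a v ((hist g)^[n] w) (hist_iter_mem g hw n) := by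
  induction n with
  | zero => rfl
  | succ n ih =>
    rw [Function.iterate_succ_apply', ih, Tmap_mkC]
    apply Subtype.ext
    show ((hist g ((hist g)^[n] w)), (0:ℝ), (0:ℝ)) = ((hist g)^[n+1] w, (0:ℝ), (0:ℝ))
    rw [← Function.iterate_succ_apply' (hist g) n w]

lemma Tmap_injective : Function.Injective (Tmap g a v hv) := by
  intro p q h
  have hval : Tval g a p.1 = Tval g a q.1 := congrArg Subtype.val h
  have hS3val : ∀ r : (ℕ → Z) × ℝ × ℝ, r ∈ S3 g → Tval g a r = (hist g r.1, 0, 0) := by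
    intro r hr
    rw [Tval_S3 g a hr]
    obtain ⟨_, h2, h3⟩ := (mem_S3_iff g r).1 hr
    show (hist g r.1, phiP r.2.1, phiM r.2.2) = _
    rw [h2, h3, phiP_zero, phiM_zero]
  rcases Yset_cases g a v p.2 with ⟨m, hm⟩ | ⟨k, hk⟩ | hp <;>
    rcases Yset_cases g a v q.2 with ⟨m', hm'⟩ | ⟨k', hk'⟩ | hq
  -- A A
  · rw [hm, hm', Tval_pA, Tval_pA] at hval
    have := pA_injective g a hval
    apply Subtype.ext; rw [hm, hm']; congr 1; omega
  -- A B
  · rw [hm, hk', Tval_pA] at hval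
    match k' with
    | 0 =>
      rw [Tval_pB0] at hval
      exact absurd (th_injective (congrArg (fun r => r.2.1) hval)) (by omega)
    | (k'+1) =>
      rw [Tval_pBsucc g a v hv] at hval
      have : th (m+1) = 0 := congrArg (fun r => r.2.1) hval
      exact absurd this (th_ne_zero _)
  -- A S3
  · rw [hm, Tval_pA, hS3val q.1 hq] at hval
    have : th (m+1) = 0 := congrArg (fun r => r.2.1) hval
    exact absurd this (th_ne_zero _)
  -- B A
  · rw [hk, hm', Tval_pA] at hval
    match k with
    | 0 =>
      rw [Tval_pB0] at hval
      exact absurd (th_injective (congrArg (fun r => r.2.1) hval)).symm (by omega)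
    | (k+1) =>
      rw [Tval_pBsucc g a v hv] at hval
      have : th (m'+1) = 0 := (congrArg (fun r => r.2.1) hval).symm
      exact absurd this (th_ne_zero _)
  -- B B
  · match k, k' with
    | 0, 0 => apply Subtype.ext; rw [hk, hk']
    | 0, (k'+1) =>
      rw [hk, hk', Tval_pB0, Tval_pBsucc g a v hv] at hval
      have : th 0 = 0 := congrArg (fun r => r.2.1) hval
      exact absurd this (th_ne_zero _)
    | (k+1), 0 =>
      rw [hk, hk', Tval_pB0, Tval_pBsucc g a v hv] at hval
      have : th 0 = 0 := (congrArg (fun r => r.2.1) hval).symm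
      exact absurd this (th_ne_zero _)
    | (k+1), (k'+1) =>
      rw [hk, hk', Tval_pBsucc g a v hv, Tval_pBsucc g a v hv] at hval
      have := pB_injective v hval
      apply Subtype.ext; rw [hk, hk', this]
  -- B S3
  · rw [hk, hS3val q.1 hq] at hval
    match k with
    | 0 =>
      rw [Tval_pB0] at hval
      have : th 0 = 0 := congrArg (fun r => r.2.1) hval
      exact absurd this (th_ne_zero _)
    | (k+1) =>
      rw [Tval_pBsucc g a v hv] at hval
      have : th k = 0 := congrArg (fun r => r.2.2) hval
      exact absurd this (th_ne_zero _)
  -- S3 A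
  · rw [hm', Tval_pA, hS3val p.1 hp] at hval
    have : th (m'+1) = 0 := (congrArg (fun r => r.2.1) hval).symm
    exact absurd this (th_ne_zero _)
  -- S3 B
  · rw [hk', hS3val p.1 hp] at hval
    match k' with
    | 0 =>
      rw [Tval_pB0] at hval
      have : th 0 = 0 := (congrArg (fun r => r.2.1) hval).symm
      exact absurd this (th_ne_zero _)
    | (k'+1) =>
      rw [Tval_pBsucc g a v hv] at hval
      have : th k' = 0 := (congrArg (fun r => r.2.2) hval).symm
      exact absurd this (th_ne_zero _)
  -- S3 S3
  · rw [hS3val p.1 hp, hS3val q.1 hq] at hval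
    have h1 : p.1.1 = q.1.1 := hist_injective g (congrArg Prod.fst hval)
    obtain ⟨_, hp2, hp3⟩ := (mem_S3_iff g p.1).1 hp
    obtain ⟨_, hq2, hq3⟩ := (mem_S3_iff g q.1).1 hq
    apply Subtype.ext
    apply Prod.ext h1
    apply Prod.ext
    · rw [hp2, hq2]
    · rw [hp3, hq3]

lemma Tmap_surjective : Function.Surjective (Tmap g a v hv) := by
  intro r
  rcases Yset_cases g a v r.2 with ⟨m, hm⟩ | ⟨k, hk⟩ | hr
  · match m with
    | 0 =>
      refine ⟨mkB g a v 0, Subtype.ext ?_⟩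
      show Tval g a (pB v 0) = r.1
      rw [Tval_pB0, hm]
    | (m+1) =>
      refine ⟨mkA g a v m, Subtype.ext ?_⟩
      show Tval g a (pA g a m) = r.1
      rw [Tval_pA, hm]
  · refine ⟨mkB g a v (k+1), Subtype.ext ?_⟩
    show Tval g a (pB v (k+1)) = r.1
    rw [Tval_pBsucc g a v hv, hk]
  · obtain ⟨hw, h2, h3⟩ := (mem_S3_iff g r.1).1 hr
    refine ⟨mkC g a v (shif r.1.1) (shif_mem_Xhat hw), Subtype.ext ?_⟩
    show Tval g a (shif r.1.1, 0, 0) = r.1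
    rw [Tval_S3 g a ((mem_S3_iff g _).mpr ⟨shif_mem_Xhat hw, rfl, rfl⟩)]
    show (hist g (shif r.1.1), phiP 0, phiM 0) = r.1
    rw [phiP_zero, phiM_zero, hist_shif hw]
    rw [Prod.ext_iff]
    refine ⟨rfl, ?_⟩
    rw [Prod.ext_iff]
    exact ⟨h2.symm, h3.symm⟩

lemma Yset_third {p : (ℕ → Z) × ℝ × ℝ} (hp : p ∈ Yset g a v) :
    p.2.2 = 0 ∨ ∃ k, p.2.2 = th k ∧ p = pB v k := by
  rcases Yset_cases g a v hp with ⟨m, rfl⟩ | ⟨k, rfl⟩ | h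
  · exact Or.inl rfl
  · exact Or.inr ⟨k, rfl, rfl⟩
  · exact Or.inl ((mem_S3_iff g p).1 h).2.2

lemma Tmap_continuous (hg : Continuous g) : Continuous (Tmap g a v hv) := by
  rw [continuous_iff_continuousAt]
  intro p
  rw [Topology.IsInducing.continuousAt_iff Topology.IsInducing.subtypeVal]
  by_cases hp : p.1.2.2 = th 0
  -- p is the junction point pB v 0 : isolated
  · have hpB : p.1 = pB v 0 := by
      rcases Yset_third g a v p.2 with h0 | ⟨k, hk, hpk⟩
      · rw [h0] at hp; exact absurd hp.symm (th_ne_zero 0)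
      · rw [hk] at hp
        rw [hpk, th_injective hp]
    have hiso : {q : ↥(Yset g a v) | th 1 < q.1.2.2} ∈ 𝓝 p := by
      have hopen : IsOpen {q : ↥(Yset g a v) | th 1 < q.1.2.2} := by
        have : Continuous (fun q : ↥(Yset g a v) => q.1.2.2) :=
          (continuous_snd.comp continuous_snd).comp continuous_subtype_val
        exact isOpen_lt continuous_const this
      refine hopen.mem_nhds ?_
      show th 1 < p.1.2.2
      rw [hp]
      exact th_lt_th (by omega)
    have hsingle : ∀ q : ↥(Yset g a v), th 1 < q.1.2.2 → q = p := by
      intro q hq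
      rcases Yset_third g a v q.2 with h0 | ⟨k, hk, hqk⟩
      · rw [h0] at hq; exact absurd hq (not_lt.mpr (th_pos 1).le)
      · rw [hk] at hq
        have hk0 : k = 0 := by
          by_contra hne
          have : th k ≤ th 1 := th_le_th (by omega)
          linarith
      -- q = pB v 0 = p
        apply Subtype.ext
        rw [hqk, hk0, hpB]
    apply Filter.EventuallyEq.continuousAt (y := (Tmap g a v hv p).1)
    filter_upwards [hiso] with q hq
    rw [hsingle q hq]
    rfl
  -- Tval agrees with Gmap near p
  · have hlt : p.1.2.2 < th 0 := by
      rcases Yset_third g a v p.2 with h0 | ⟨k, hk, _⟩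
      · rw [h0]; exact th_pos 0
      · rw [hk]
        rcases Nat.eq_zero_or_pos k with rfl | hpos
        · exact absurd hk ((fun h => hp (by rw [h]))) -- k = 0 contradicts hp
        · exact th_lt_th hpos
    have hnb : {q : ↥(Yset g a v) | q.1.2.2 < th 0} ∈ 𝓝 p := by
      have hopen : IsOpen {q : ↥(Yset g a v) | q.1.2.2 < th 0} := by
        have : Continuous (fun q : ↥(Yset g a v) => q.1.2.2) :=
          (continuous_snd.comp continuous_snd).comp continuous_subtype_val
        exact isOpen_lt this continuous_const
      exact hopen.mem_nhds hlt
    have hcont : ContinuousAt (fun q : ↥(Yset g a v) => Gmap g q.1) p :=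
      ((Gmap_cont g hg).comp continuous_subtype_val).continuousAt
    apply hcont.congr
    filter_upwards [hnb] with q hq
    show Gmap g q.1 = (Tmap g a v hv q).1
    have h1 : (Tmap g a v hv q).1 = Tval g a q.1 := rfl
    rw [h1]
    unfold Tval
    exact (if_neg (ne_of_lt hq)).symm

end Chunk5

section Chunk6
variable {Z : Type} [MetricSpace Z] [CompactSpace Z]

lemma rho_iter {g ρ : Z → Z} (hc : ∀ z, ρ (g z) = g (ρ z)) (n : ℕ) (z : Z) :
    ρ (g^[n] z) = g^[n] (ρ z) := by
  induction n with
  | zero => rfl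
  | succ n ih =>
    rw [Function.iterate_succ_apply', Function.iterate_succ_apply', hc, ih]

lemma exists_deep_times (F : Set (Set ℕ)) (hFne : ∀ B ∈ F, B.Nonempty)
    (g : Z → Z) (a b : Z)
    (h1 : ∀ O ∈ 𝓝 b, {n | 0 < n ∧ g^[n] a ∈ O} ∈ F)
    (hab : ∀ n, 0 < n → g^[n] a = b → g^[n] b = b) :
    ∃ ms : ℕ → ℕ, (∀ j, 0 < ms j) ∧ Tendsto ms atTop atTop ∧
      Tendsto (fun j => g^[ms j] a) atTop (𝓝 b) := by
  by_cases hA : ∃ n, 0 < n ∧ g^[n] a = b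
  · obtain ⟨n0, hn0, hfix⟩ := hA
    have hbfix : g^[n0] b = b := hab n0 hn0 hfix
    have hval : ∀ j : ℕ, g^[(j+1) * n0] a = b := by
      intro j
      induction j with
      | zero =>
        have h : (0+1) * n0 = n0 := by ring
        rw [h]; exact hfix
      | succ j ih =>
        have : (j+2) * n0 = n0 + (j+1) * n0 := by ring
        rw [this, Function.iterate_add_apply, ih, hbfix]
    refine ⟨fun j => (j+1) * n0, fun j => by positivity, ?_, ?_⟩
    · have hge : ∀ j : ℕ, j ≤ (j+1) * n0 := by
        intro j
        calc j ≤ (j+1) * 1 := by omega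
        _ ≤ (j+1) * n0 := Nat.mul_le_mul_left _ hn0
      exact Filter.tendsto_atTop_mono hge tendsto_id
    · have : (fun j : ℕ => g^[(j+1) * n0] a) = fun _ => b := funext hval
      rw [this]
      exact tendsto_const_nhds
  · push_neg at hA
    have key : ∀ M : ℕ, ∃ n, 0 < n ∧ M < n ∧ dist (g^[n] a) b < 1/(M+1) := by
      intro M
      rcases (Finset.Icc 1 M).eq_empty_or_nonempty with he | hne
      · have hM : M = 0 := by
          by_contra h
          have : 1 ∈ Finset.Icc 1 M := by
            rw [Finset.mem_Icc]; omega
          rw [he] at this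
          exact absurd this (Finset.notMem_empty 1)
        have hball : Metric.ball b (1/(M+1)) ∈ 𝓝 b :=
          Metric.ball_mem_nhds b (by positivity)
        obtain ⟨n, hn, hmem⟩ := hFne _ (h1 _ hball)
        exact ⟨n, hn, by omega, hmem⟩
      · set δ := (Finset.Icc 1 M).inf' hne (fun n => dist (g^[n] a) b) with hδ
        have hδpos : 0 < δ := by
          rw [hδ, Finset.lt_inf'_iff]
          intro n hn
          rw [Finset.mem_Icc] at hn
          exact dist_pos.mpr (hA n (by omega))
        have hball : Metric.ball b (min δ (1/(M+1))) ∈ 𝓝 b :=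
          Metric.ball_mem_nhds b (lt_min hδpos (by positivity))
        obtain ⟨n, hn, hmem⟩ := hFne _ (h1 _ hball)
        rw [Metric.mem_ball] at hmem
        have hdist : dist (g^[n] a) b < min δ (1/(M+1)) := hmem
        refine ⟨n, hn, ?_, lt_of_lt_of_le hdist (min_le_right _ _)⟩
        by_contra hle
        have hnM : n ∈ Finset.Icc 1 M := by rw [Finset.mem_Icc]; omega
        have : δ ≤ dist (g^[n] a) b := Finset.inf'_le _ hnM
        have : δ < δ := lt_of_le_of_lt this (lt_of_lt_of_le hdist (min_le_left _ _))
        exact lt_irrefl δ this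
    choose ms h0 hgt hdist using key
    refine ⟨ms, h0, ?_, ?_⟩
    · exact Filter.tendsto_atTop_mono (fun M => (hgt M).le) tendsto_id
    · rw [tendsto_iff_dist_tendsto_zero]
      apply squeeze_zero (fun _ => dist_nonneg) (fun M => (hdist M).le)
      have : Tendsto (fun M : ℕ => 1/((M:ℝ)+1)) atTop (𝓝 0) :=
        tendsto_one_div_add_atTop_nhds_zero_nat
      exact this

lemma cylinder_basis {v0 : ℕ → Z} {V : Set ((ℕ → Z) × ℝ × ℝ)}
    (hV : V ∈ 𝓝 ((v0, (0:ℝ), (0:ℝ)))) :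
    ∃ N : ℕ, ∃ ε : ℝ, 0 < ε ∧ ∀ w : ℕ → Z, ∀ s t : ℝ,
      (∀ i ≤ N, dist (w i) (v0 i) < ε) → |s| < ε → |t| < ε → (w, s, t) ∈ V := by
  rw [mem_nhds_prod_iff] at hV
  obtain ⟨Vw, hVw, Vst, hVst, hsub⟩ := hV
  rw [mem_nhds_prod_iff] at hVst
  obtain ⟨Vs, hVs, Vt, hVt, hsub2⟩ := hVst
  rw [Metric.mem_nhds_iff] at hVs hVt
  obtain ⟨ε₁, hε₁, hballs⟩ := hVs
  obtain ⟨ε₂, hε₂, hballt⟩ := hVt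
  rw [nhds_pi, Filter.mem_pi] at hVw
  obtain ⟨I, hIfin, tset, htset, hIsub⟩ := hVw
  have hballw : ∀ i, ∃ εi : ℝ, 0 < εi ∧ Metric.ball (v0 i) εi ⊆ tset i := by
    intro i
    rw [← Metric.mem_nhds_iff]
    exact htset i
  choose εf hεf hballf using hballw
  obtain ⟨N, hN⟩ := hIfin.bddAbove
  set J := hIfin.toFinset with hJ
  set εJ := if h : J.Nonempty then J.inf' h εf else 1 with hεJ
  have hεJpos : 0 < εJ := by
    rw [hεJ]
    split
    · rename_i h
      rw [Finset.lt_inf'_iff]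
      intro i _
      exact hεf i
    · norm_num
  refine ⟨N, min ε₁ (min ε₂ εJ), by positivity, ?_⟩
  intro w s t hw hs ht
  apply hsub
  constructor
  · -- w ∈ Vw
    apply hIsub
    intro i hi
    apply hballf
    rw [Metric.mem_ball]
    have hiN : i ≤ N := hN hi
    have hiJ : i ∈ J := by rw [hJ, Set.Finite.mem_toFinset]; exact hi
    have h1 : εJ ≤ εf i := by
      rw [hεJ]
      rw [dif_pos ⟨i, hiJ⟩]
      exact Finset.inf'_le _ hiJ
    calc dist (w i) (v0 i) < min ε₁ (min ε₂ εJ) := hw i hiN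
    _ ≤ εJ := le_trans (min_le_right _ _) (min_le_right _ _)
    _ ≤ εf i := h1
  · -- (s,t) ∈ Vst
    apply hsub2
    constructor
    · apply hballs
      rw [Metric.mem_ball, Real.dist_eq, sub_zero]
      exact lt_of_lt_of_le hs (min_le_left _ _)
    · apply hballt
      rw [Metric.mem_ball, Real.dist_eq, sub_zero]
      exact lt_of_lt_of_le ht (le_trans (min_le_right _ _) (min_le_left _ _))

end Chunk6

section Chunk7

lemma master {Z : Type} [MetricSpace Z] [CompactSpace Z]
    (F : Set (Set ℕ)) (hF : IsFurstenbergFamily F) (hTI : TranslationInvariant F)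
    (A : Set ℕ) (g : Z → Z) (hg : Continuous g) (a b : Z) (ρ : Z → Z) (hρ : Continuous ρ)
    (hρg : ∀ z, ρ (g z) = g (ρ z)) (hρa : ρ a = b) (hρb : ρ b = b)
    (h1 : ∀ O ∈ 𝓝 b, {n | 0 < n ∧ g^[n] a ∈ O} ∈ F)
    (O₀ : Set Z) (hO₀ : O₀ ∈ 𝓝 b) (h2 : {n | 0 < n ∧ g^[n] a ∈ O₀} ⊆ A) :
    ∃ (X : Type) (_ : MetricSpace X) (_ : CompactSpace X) (T : X → X),
      IsHomeomorph T ∧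
        ∃ x y : X, StronglyProximal F T x y ∧ ∃ U ∈ nhds y, retTimes2 T x y U ⊆ A := by
  classical
  -- the auxiliary identity `g^[n] b = ρ (g^[n] a)`
  have hgb : ∀ n : ℕ, g^[n] b = ρ (g^[n] a) := by
    intro n
    rw [rho_iter hρg, hρa]
  -- deep return times
  have hab : ∀ n, 0 < n → g^[n] a = b → g^[n] b = b := by
    intro n _ h
    rw [hgb n, h, hρb]
  obtain ⟨ms, hms0, hmstop, hmsconv⟩ := exists_deep_times F hF.2.1 g a b h1 hab
  -- a convergent subsequence of the `b`-histories
  obtain ⟨v, -, φ, hφ, hvlim⟩ :=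
    (isCompact_univ (X := ℕ → Z)).tendsto_subseq
      (x := fun j => pad g b (ms j)) (fun n => mem_univ _)
  set me : ℕ → ℕ := ms ∘ φ with hme
  have hmetop : Tendsto me atTop atTop := hmstop.comp hφ.tendsto_atTop
  have hmeconv : Tendsto (fun j => g^[me j] a) atTop (𝓝 b) := hmsconv.comp hφ.tendsto_atTop
  have hvlim' : Tendsto (fun j => pad g b (me j)) atTop (𝓝 v) := hvlim
  -- v has the inverse limit property and starts at b
  have hv0 : v 0 = b := by
    have hc0 : Tendsto (fun j => pad g b (me j) 0) atTop (𝓝 (v 0)) :=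
      tendsto_pi_nhds.1 hvlim' 0
    have he : (fun j => pad g b (me j) 0) = fun j => ρ (g^[me j] a) := by
      funext j
      show g^[me j - 0] b = _
      rw [Nat.sub_zero, hgb]
    rw [he] at hc0
    have hc1 : Tendsto (fun j => ρ (g^[me j] a)) atTop (𝓝 (ρ b)) :=
      (hρ.tendsto b).comp hmeconv
    rw [hρb] at hc1
    exact tendsto_nhds_unique hc0 hc1
  have hvXhat : v ∈ Xhat g := by
    intro i
    have hci : Tendsto (fun j => pad g b (me j) i) atTop (𝓝 (v i)) :=
      tendsto_pi_nhds.1 hvlim' i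
    have hci1 : Tendsto (fun j => pad g b (me j) (i+1)) atTop (𝓝 (v (i+1))) :=
      tendsto_pi_nhds.1 hvlim' (i+1)
    have hL : Tendsto (fun j => g (pad g b (me j) (i+1))) atTop (𝓝 (g (v (i+1)))) :=
      (hg.tendsto _).comp hci1
    have hEq : (fun j => g (pad g b (me j) (i+1))) =ᶠ[atTop] fun j => pad g b (me j) i := by
      filter_upwards [hmetop.eventually_ge_atTop (i+1)] with j hj
      exact pad_rel g b hj
    exact tendsto_nhds_unique (hL.congr' hEq) hci
  -- the invertible system
  haveI hYcomp : CompactSpace ↥(Yset g a v) :=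
    isCompact_iff_compactSpace.mp (Yset_compact g a v hg hvXhat)
  letI : MetricSpace ↥(Yset g a v) := TopologicalSpace.metrizableSpaceMetric _
  refine ⟨↥(Yset g a v), inferInstance, inferInstance, Tmap g a v hvXhat, ?_, ?_⟩
  · -- homeomorphism
    rw [isHomeomorph_iff_exists_homeomorph]
    have hbij : Function.Bijective (Tmap g a v hvXhat) :=
      ⟨Tmap_injective g a v hvXhat, Tmap_surjective g a v hvXhat⟩
    exact ⟨Continuous.homeoOfEquivCompactToT2
        (f := Equiv.ofBijective _ hbij) (Tmap_continuous g a v hvXhat hg), rfl⟩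
  refine ⟨mkA g a v 0, mkC g a v v hvXhat, ?_, ?_⟩
  · -- strong proximality
    intro V hV
    rw [nhds_subtype_eq_comap, Filter.mem_comap] at hV
    obtain ⟨Vamb, hVamb, hVsub⟩ := hV
    have hVamb' : Vamb ∈ 𝓝 ((v, (0:ℝ), (0:ℝ))) := hVamb
    obtain ⟨N, ε, hε, hcyl⟩ := cylinder_basis hVamb'
    -- choose the base time m₀
    have ev1 : ∀ᶠ j in atTop, N + 1 ≤ me j := hmetop.eventually_ge_atTop (N+1)
    have ev2 : ∀ᶠ j in atTop, ∀ i ∈ Finset.range (N+1), dist (pad g b (me j) i) (v i) < ε/3 := by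
      rw [Filter.eventually_all_finset]
      intro i _
      have := tendsto_pi_nhds.1 hvlim' i
      rw [Metric.tendsto_nhds] at this
      exact this (ε/3) (by positivity)
    have ev3 : ∀ᶠ j in atTop, th (me j) < ε := by
      have h := th_tendsto.comp hmetop
      rw [Metric.tendsto_nhds] at h
      filter_upwards [h ε hε] with j hj
      calc th (me j) ≤ |th (me j) - 0| := by
            rw [sub_zero]; exact le_abs_self _
      _ < ε := by rw [← Real.dist_eq]; exact hj
    obtain ⟨j₀, hj1, hj2, hj3⟩ := (ev1.and (ev2.and ev3)).exists
    set m₀ := me j₀ with hm₀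
    -- the continuity neighborhood O
    have hO : (⋂ l ∈ Finset.range (m₀+1), (g^[l]) ⁻¹' (Metric.ball (g^[l] b) (ε/3))) ∈ 𝓝 b := by
      rw [Filter.biInter_finset_mem]
      intro l _
      exact ((hg.iterate l).continuousAt).preimage_mem_nhds
        (Metric.ball_mem_nhds _ (by positivity))
    set O := ⋂ l ∈ Finset.range (m₀+1), (g^[l]) ⁻¹' (Metric.ball (g^[l] b) (ε/3)) with hOdef
    have hO' : O ∩ ρ ⁻¹' O ∈ 𝓝 b := by
      apply Filter.inter_mem hO
      apply (hρ.continuousAt).preimage_mem_nhds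
      rw [hρb]
      exact hO
    have hD0 : {n | 0 < n ∧ g^[n] a ∈ O ∩ ρ ⁻¹' O} ∈ F := h1 _ hO'
    have hD : (fun n => m₀ + n) '' {n | 0 < n ∧ g^[n] a ∈ O ∩ ρ ⁻¹' O} ∈ F :=
      hTI m₀ _ hD0
    apply hF.2.2 _ _ hD
    rintro _ ⟨c, ⟨hc0, hcO, hcρ⟩, rfl⟩
    have hOmem : ∀ z : Z, z ∈ O → ∀ l ≤ m₀, dist (g^[l] z) (g^[l] b) < ε/3 := by
      intro z hz l hl
      rw [hOdef] at hz
      simp only [Set.mem_iInter, Finset.mem_range] at hz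
      exact hz l (by omega)
    refine ⟨by show 0 < m₀ + c; omega, ?_, ?_⟩
    · -- forward orbit point
      rw [Tmap_iter_mkA]
      apply hVsub
      show (pad g a (m₀ + c), th (m₀ + c), (0:ℝ)) ∈ Vamb
      apply hcyl
      · intro i hi
        have hsub : m₀ + c - i = (m₀ - i) + c := by omega
        have hpadeq : pad g a (m₀+c) i = g^[m₀ - i] (g^[c] a) := by
          show g^[m₀ + c - i] a = _
          rw [hsub, Function.iterate_add_apply]
        rw [hpadeq]
        have hd1 : dist (g^[m₀ - i] (g^[c] a)) (g^[m₀ - i] b) < ε/3 :=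
          hOmem _ hcO _ (by omega)
        have hd2 : dist (pad g b m₀ i) (v i) < ε/3 :=
          hj2 i (Finset.mem_range.mpr (by omega))
        have hpb : g^[m₀ - i] b = pad g b m₀ i := rfl
        calc dist (g^[m₀ - i] (g^[c] a)) (v i)
            ≤ dist (g^[m₀ - i] (g^[c] a)) (g^[m₀ - i] b) + dist (g^[m₀ - i] b) (v i) :=
              dist_triangle _ _ _
        _ < ε/3 + ε/3 := by rw [hpb]; exact add_lt_add hd1 hd2
        _ < ε := by linarith
      · rw [abs_of_pos (th_pos _)]
        calc th (m₀ + c) ≤ th m₀ := th_le_th (by omega)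
        _ < ε := hj3
      · rw [abs_zero]; exact hε
    · -- limit orbit point
      rw [Tmap_iter_mkC]
      apply hVsub
      show ((hist g)^[m₀ + c] v, (0:ℝ), (0:ℝ)) ∈ Vamb
      apply hcyl
      · intro i hi
        have hsub : m₀ + c - i = (m₀ - i) + c := by omega
        have heq : (hist g)^[m₀ + c] v i = g^[m₀ - i] (g^[c] b) := by
          rw [hist_iter_apply g _ v i (by omega), hv0, hsub, Function.iterate_add_apply]
        rw [heq]
        have hcb : g^[c] b ∈ O := by
          rw [hgb]
          exact hcρ
        have hd1 : dist (g^[m₀ - i] (g^[c] b)) (g^[m₀ - i] b) < ε/3 :=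
          hOmem _ hcb _ (by omega)
        have hd2 : dist (pad g b m₀ i) (v i) < ε/3 :=
          hj2 i (Finset.mem_range.mpr (by omega))
        have hpb : g^[m₀ - i] b = pad g b m₀ i := rfl
        calc dist (g^[m₀ - i] (g^[c] b)) (v i)
            ≤ dist (g^[m₀ - i] (g^[c] b)) (g^[m₀ - i] b) + dist (g^[m₀ - i] b) (v i) :=
              dist_triangle _ _ _
        _ < ε/3 + ε/3 := by rw [hpb]; exact add_lt_add hd1 hd2
        _ < ε := by linarith
      · rw [abs_zero]; exact hε
      · rw [abs_zero]; exact hε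
  · -- the neighborhood witnessing containment in A
    refine ⟨{p : ↥(Yset g a v) | p.1.1 0 ∈ interior O₀}, ?_, ?_⟩
    · apply IsOpen.mem_nhds
      · exact isOpen_interior.preimage
          ((continuous_apply 0).comp (continuous_fst.comp continuous_subtype_val))
      · show v 0 ∈ interior O₀
        rw [hv0]
        exact mem_interior_iff_mem_nhds.mpr hO₀
    · rintro n ⟨hn, hx, -⟩
      rw [Tmap_iter_mkA] at hx
      have : g^[n] a ∈ interior O₀ := by
        have : pad g a n 0 ∈ interior O₀ := hx
        rwa [show pad g a n 0 = g^[n] a from by show g^[n-0] a = _; rw [Nat.sub_zero]] at this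
      exact h2 ⟨hn, interior_subset this⟩

end Chunk7

section Chunk8

lemma prodmap_iter {X : Type} (T : X → X) (n : ℕ) (p : X × X) :
    (fun q : X × X => (T q.1, T q.2))^[n] p = (T^[n] p.1, T^[n] p.2) := by
  induction n generalizing p with
  | zero => rfl
  | succ n ih =>
    rw [Function.iterate_succ_apply, Function.iterate_succ_apply,
      Function.iterate_succ_apply, ih]

end Chunk8
end EssLem33


/-- Lemma 3.3: for a translation `+` invariant Furstenberg family `F`, every essential
`F`-set is an essential `F`-set via an invertible dynamical system. -/
theorem essentialSet_via_homeomorphism (F : Set (Set ℕ)) (hF : IsFurstenbergFamily F)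
    (hTI : TranslationInvariant F) (A : Set ℕ) (hA : IsEssentialSet F A) :
    ∃ (X : Type) (_ : MetricSpace X) (_ : CompactSpace X) (T : X → X),
      IsHomeomorph T ∧
        ∃ x y : X, StronglyProximal F T x y ∧ ∃ U ∈ nhds y, retTimes2 T x y U ⊆ A := by
  obtain ⟨X₀, _, _, T, hT, x, y, hSP, U₀, hU₀, hU₀A⟩ := hA
  set g : X₀ × X₀ → X₀ × X₀ := fun q => (T q.1, T q.2) with hgdef
  have hg : Continuous g := (hT.comp continuous_fst).prodMk (hT.comp continuous_snd)
  set ρ : X₀ × X₀ → X₀ × X₀ := fun q => (q.2, q.2) with hρdef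
  have hρ : Continuous ρ := continuous_snd.prodMk continuous_snd
  apply EssLem33.master F hF hTI A g hg (x, y) (y, y) ρ hρ
  · intro z
    rfl
  · rfl
  · rfl
  · -- h1
    intro O hO
    rw [mem_nhds_prod_iff] at hO
    obtain ⟨O₁, hO₁, O₂, hO₂, hOsub⟩ := hO
    have hU : O₁ ∩ O₂ ∈ nhds y := Filter.inter_mem hO₁ hO₂
    apply hF.2.2 _ _ (hSP _ hU)
    rintro n ⟨hn, hx, hy⟩
    refine ⟨hn, ?_⟩
    rw [EssLem33.prodmap_iter]
    exact hOsub ⟨hx.1, hy.2⟩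
  · -- O₀ ∈ 𝓝 (y,y)
    exact mem_nhds_prod_iff.mpr ⟨U₀, hU₀, U₀, hU₀, subset_rfl⟩
  · -- h2
    rintro n ⟨hn, hmem⟩
    rw [EssLem33.prodmap_iter] at hmem
    exact hU₀A ⟨hn, hmem.1, hmem.2⟩
end

section
/- Let F be a Furstenberg family on ℕ. If A ⊆ ℕ is an essential F-set, then there exists an essential F-set M ⊆ A such that for every m ∈ M, the set (−m + A) ∩ A = {n ∈ ℕ : n + m ∈ A} ∩ A is an essential F-set. In particular, (A − A) ∩ A, where A − A = {a − b : a, b ∈ A, a > b}, is an essential F-set. -/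
open Set Filter Topology

attribute [local instance] Ultrafilter.add

/-- Lemma 3.5: if `A` is an essential `F`-set, then there is an essential `F`-set `M ⊆ A`
such that `(−m+A) ∩ A` is an essential `F`-set for every `m ∈ M`; in particular
`(A−A) ∩ A` is an essential `F`-set. -/
theorem essentialSet_difference (F : Set (Set ℕ)) (hF : IsFurstenbergFamily F)
    (A : Set ℕ) (hA : IsEssentialSet F A) :
    (∃ M : Set ℕ, IsEssentialSet F M ∧ M ⊆ A ∧
      ∀ m ∈ M, IsEssentialSet F ({n : ℕ | n + m ∈ A} ∩ A)) ∧
    IsEssentialSet F ({k : ℕ | ∃ a ∈ A, ∃ b ∈ A, b < a ∧ k = a - b} ∩ A) := by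
  obtain ⟨X, hMS, hCS, T, hT, x, y, hsp, U, hU, hUA⟩ := hA
  have hVy : interior U ∈ nhds y := interior_mem_nhds.2 hU
  set M := retTimes2 T x y (interior U) with hMdef
  have hMA : M ⊆ A := fun n hn =>
    hUA ⟨hn.1, interior_subset hn.2.1, interior_subset hn.2.2⟩
  have hMF : M ∈ F := hsp _ hVy
  have hMess : IsEssentialSet F M :=
    ⟨X, hMS, hCS, T, hT, x, y, hsp, interior U, hVy, subset_rfl⟩
  have key : ∀ m ∈ M, ∃ W ∈ nhds y,
      retTimes2 T x y W ⊆ {n : ℕ | n + m ∈ A} ∩ A := by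
    intro m hm
    obtain ⟨hm0, hmx, hmy⟩ := hm
    refine ⟨interior U ∩ T^[m] ⁻¹' interior U,
      (IsOpen.mem_nhds (isOpen_interior.inter
        (isOpen_interior.preimage (hT.iterate m)))
        ⟨mem_of_mem_nhds hVy, hmy⟩), ?_⟩
    rintro n ⟨hn0, hnx, hny⟩
    refine ⟨hMA ⟨by omega, ?_, ?_⟩, hMA ⟨hn0, hnx.1, hny.1⟩⟩
    · rw [Nat.add_comm, Function.iterate_add_apply]; exact hnx.2
    · rw [Nat.add_comm, Function.iterate_add_apply]; exact hny.2
  constructor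
  · refine ⟨M, hMess, hMA, fun m hm => ?_⟩
    obtain ⟨W, hW, hWsub⟩ := key m hm
    exact ⟨X, hMS, hCS, T, hT, x, y, hsp, W, hW, hWsub⟩
  · obtain ⟨m, hm⟩ := hF.2.1 _ hMF
    obtain ⟨W, hW, hWsub⟩ := key m hm
    refine ⟨X, hMS, hCS, T, hT, x, y, hsp, W, hW, fun n hn => ?_⟩
    have hn0 : 0 < n := hn.1
    obtain ⟨hnm, hnA⟩ := hWsub hn
    exact ⟨⟨n + m, hnm, m, hMA hm, by omega, by omega⟩, hnA⟩
end

section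
/- Let F be a Furstenberg family on ℕ and let α > 0. Assume that the collection ess(F) of essential F-sets has the Ramsey property, and that for every A ∈ ess(F) and every 0 < γ < 1 the set g_{α,γ}(A) belongs to F. Then for every invertible dynamical system (X,T), all points x, y ∈ X with x F-strongly proximal to y, and every 0 < γ < 1, the pair (x,y) has the F-suspension-proximality property at level γ for the suspension (Y,F_{α⁻¹}). -/
open Set Filter Topology

attribute [local instance] Ultrafilter.add

section Aux

lemma aux_retTimes2_mono {X : Type*} (T : X → X) (x y : X) {U V : Set X} (h : U ⊆ V) :
    retTimes2 T x y U ⊆ retTimes2 T x y V := fun n hn => ⟨hn.1, h hn.2.1, h hn.2.2⟩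

lemma aux_essential_nonempty (F : Set (Set ℕ)) (hF : IsFurstenbergFamily F) {A : Set ℕ}
    (hA : IsEssentialSet F A) : A.Nonempty := by
  obtain ⟨X', _, _, T', hT', x', y', hp', U', hU', hsub⟩ := hA
  exact ((hF.2.1 _ (hp' U' hU')).mono hsub)

/-- Additivity of return times: if `m` is a return time of the pair to an open `V ∋ y'`,
then there is `m'` with both `m'` and `m + m'` return times to `V`. -/
lemma aux_S {X' : Type*} [TopologicalSpace X'] (F : Set (Set ℕ)) (hF : IsFurstenbergFamily F)
    {T' : X' → X'} (hT : Continuous T') {x' y' : X'} (hp : StronglyProximal F T' x' y')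
    {V : Set X'} (hVo : IsOpen V) (hVy : y' ∈ V) {m : ℕ} (hm : m ∈ retTimes2 T' x' y' V) :
    ∃ m', m' ∈ retTimes2 T' x' y' V ∧ m + m' ∈ retTimes2 T' x' y' V := by
  set W := V ∩ (T'^[m]) ⁻¹' V with hW
  have hWo : IsOpen W := hVo.inter ((hT.iterate m).isOpen_preimage _ hVo)
  have hWy : y' ∈ W := ⟨hVy, hm.2.2⟩
  have hWF : retTimes2 T' x' y' W ∈ F := hp W (hWo.mem_nhds hWy)
  obtain ⟨m', hm'⟩ := hF.2.1 _ hWF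
  refine ⟨m', ⟨hm'.1, hm'.2.1.1, hm'.2.2.1⟩, ?_, ?_, ?_⟩
  · have := hm'.1; omega
  · rw [Function.iterate_add_apply]; exact hm'.2.1.2
  · rw [Function.iterate_add_apply]; exact hm'.2.2.2

lemma aux_essential_unbounded (F : Set (Set ℕ)) (hF : IsFurstenbergFamily F) {A : Set ℕ}
    (hA : IsEssentialSet F A) (N : ℕ) : ∃ m ∈ A, N < m := by
  obtain ⟨X', _, _, T', hT', x', y', hp', U', hU', hsub⟩ := hA
  set V := interior U' with hVdef
  have hVo : IsOpen V := isOpen_interior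
  have hVy : y' ∈ V := mem_interior_iff_mem_nhds.mpr hU'
  have hVF : retTimes2 T' x' y' V ∈ F := hp' V (hVo.mem_nhds hVy)
  have hVA : retTimes2 T' x' y' V ⊆ A :=
    (aux_retTimes2_mono T' x' y' interior_subset).trans hsub
  suffices h : ∀ N : ℕ, ∃ m ∈ retTimes2 T' x' y' V, N < m by
    obtain ⟨m, hm, hm'⟩ := h N; exact ⟨m, hVA hm, hm'⟩
  intro N
  induction N with
  | zero =>
      obtain ⟨m, hm⟩ := hF.2.1 _ hVF
      exact ⟨m, hm, hm.1⟩
  | succ k ih =>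
      obtain ⟨m, hm, hmk⟩ := ih
      obtain ⟨m', hm', hmm'⟩ := aux_S F hF hT' hp' hVo hVy hm
      exact ⟨m + m', hmm', by have := hm'.1; omega⟩

lemma aux_ramsey (F : Set (Set ℕ)) (hF : IsFurstenbergFamily F)
    (hR : HasRamseyProperty {A : Set ℕ | IsEssentialSet F A}) :
    ∀ (k : ℕ) (C : ℕ → Set ℕ), IsEssentialSet F (⋃ i ∈ Finset.range k, C i) →
      ∃ i < k, IsEssentialSet F (C i) := by
  intro k
  induction k with
  | zero =>
      intro C hC
      exfalso
      obtain ⟨m, hm⟩ := aux_essential_nonempty F hF hC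
      simp at hm
  | succ k ih =>
      intro C hC
      have hsplit : (⋃ i ∈ Finset.range (k+1), C i) =
          (⋃ i ∈ Finset.range k, C i) ∪ C k := by
        ext n
        simp only [Set.mem_iUnion, Set.mem_union, Finset.mem_range]
        constructor
        · rintro ⟨i, hi, h⟩
          rcases Nat.lt_succ_iff_lt_or_eq.mp hi with h' | rfl
          · exact Or.inl ⟨i, h', h⟩
          · exact Or.inr h
        · rintro (⟨i, hi, h⟩ | h)
          · exact ⟨i, Nat.lt_succ_of_lt hi, h⟩
          · exact ⟨k, Nat.lt_succ_self k, h⟩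
      rw [hsplit] at hC
      rcases hR _ _ hC with h | h
      · obtain ⟨i, hi, h'⟩ := ih C h
        exact ⟨i, by omega, h'⟩
      · exact ⟨k, by omega, h⟩

/-- Key lemma: every essential set `A` has an essential subset `R` all of whose elements `m`
satisfy `1 ≤ mα` and `‖mα‖ < δ` (fractional part close to `0` or `1`). -/
lemma aux_bohr (F : Set (Set ℕ)) (hF : IsFurstenbergFamily F)
    (hR : HasRamseyProperty {A : Set ℕ | IsEssentialSet F A}) (α : ℝ) (hα : 0 < α)
    {A : Set ℕ} (hA : IsEssentialSet F A) (K : ℕ) (hK : 0 < K) :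
    ∃ R : Set ℕ, IsEssentialSet F R ∧ R ⊆ A ∧ ∀ m ∈ R,
      1 ≤ (m : ℝ) * α ∧
        (Int.fract ((m : ℝ) * α) < 1 / K ∨ 1 - 1 / K < Int.fract ((m : ℝ) * α)) := by
  set δ : ℝ := 1 / K with hδdef
  have hδ0 : 0 < δ := by positivity
  have hKδ : (K : ℝ) * δ = 1 := by
    rw [hδdef, mul_one_div_cancel (by exact_mod_cast hK.ne')]
  set B : ℕ → Set ℕ := fun i =>
    if i = K then {m ∈ A | (m : ℝ) * α < 1}
    else {m ∈ A | 1 ≤ (m : ℝ) * α ∧ (i : ℝ) * δ ≤ Int.fract ((m : ℝ) * α) ∧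
      Int.fract ((m : ℝ) * α) < ((i : ℝ) + 1) * δ} with hBdef
  have hcover : A = ⋃ i ∈ Finset.range (K + 1), B i := by
    apply Set.Subset.antisymm
    · intro m hm
      simp only [Set.mem_iUnion, Finset.mem_range]
      rcases lt_or_ge ((m : ℝ) * α) 1 with h1 | h1
      · exact ⟨K, by omega, by simp [hBdef, hm, h1]⟩
      · set f := Int.fract ((m : ℝ) * α) with hf
        have hf0 : 0 ≤ f := Int.fract_nonneg _
        have hf1 : f < 1 := Int.fract_lt_one _
        have hfδ0 : 0 ≤ f / δ := by positivity
        set i : ℕ := (⌊f / δ⌋).toNat with hi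
        have hicast : (i : ℝ) = (⌊f / δ⌋ : ℝ) := by
          rw [hi]
          exact_mod_cast congrArg (Int.cast : ℤ → ℝ)
            (Int.toNat_of_nonneg (Int.le_floor.mpr (by exact_mod_cast hfδ0)))
        have hle : (i : ℝ) ≤ f / δ := by rw [hicast]; exact Int.floor_le _
        have hlt : f / δ < (i : ℝ) + 1 := by rw [hicast]; exact Int.lt_floor_add_one _
        have hiK : i < K := by
          have : f / δ < (K : ℝ) := by
            rw [div_lt_iff₀ hδ0, mul_comm]
            linarith [hKδ]
          have h2 : (i : ℝ) < (K : ℝ) := lt_of_le_of_lt hle this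
          exact_mod_cast h2
        refine ⟨i, by omega, ?_⟩
        have hiK' : i ≠ K := by omega
        simp only [hBdef, if_neg hiK', Set.mem_setOf_eq]
        refine ⟨hm, h1, ?_, ?_⟩
        · calc (i : ℝ) * δ ≤ (f / δ) * δ := by nlinarith
            _ = f := by field_simp
        · calc f = (f / δ) * δ := by field_simp
            _ < ((i : ℝ) + 1) * δ := by nlinarith
    · intro m hm
      simp only [Set.mem_iUnion, Finset.mem_range] at hm
      obtain ⟨i, hi, hmi⟩ := hm
      by_cases h : i = K
      · simp only [hBdef, if_pos h, Set.mem_setOf_eq] at hmi; exact hmi.1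
      · simp only [hBdef, if_neg h, Set.mem_setOf_eq] at hmi; exact hmi.1
  rw [hcover] at hA
  obtain ⟨i, hi, hBi⟩ := aux_ramsey F hF hR (K + 1) B hA
  have hiK : i ≠ K := by
    rintro rfl
    obtain ⟨m, hm, hmlt⟩ := aux_essential_unbounded F hF hBi (Nat.ceil (1 / α))
    simp only [hBdef, if_pos rfl, Set.mem_setOf_eq] at hm
    have h1 : (1 : ℝ) / α < (m : ℝ) := lt_of_le_of_lt (Nat.le_ceil _) (by exact_mod_cast hmlt)
    have : (1 : ℝ) < (m : ℝ) * α := by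
      rw [div_lt_iff₀ hα] at h1; linarith
    linarith [hm.2]
  have hBieq : B i = {m ∈ A | 1 ≤ (m : ℝ) * α ∧ (i : ℝ) * δ ≤ Int.fract ((m : ℝ) * α) ∧
      Int.fract ((m : ℝ) * α) < ((i : ℝ) + 1) * δ} := by
    simp only [hBdef, if_neg hiK]
  -- unpack the witness of `B i` being essential
  obtain ⟨X', mX', cX', T', hT', x', y', hp', U', hU', hsub⟩ := hBi
  set V := interior U' with hVdef
  have hVo : IsOpen V := isOpen_interior
  have hVy : y' ∈ V := mem_interior_iff_mem_nhds.mpr hU'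
  set R := retTimes2 T' x' y' V with hRdef
  have hRBi : R ⊆ B i := (aux_retTimes2_mono T' x' y' interior_subset).trans hsub
  refine ⟨R, ⟨X', mX', cX', T', hT', x', y', hp', V, hVo.mem_nhds hVy, subset_rfl⟩, ?_, ?_⟩
  · intro m hm
    have := hRBi hm
    rw [hBieq] at this
    exact this.1
  · intro m hm
    have hmB := hRBi hm
    rw [hBieq] at hmB
    refine ⟨hmB.2.1, ?_⟩
    obtain ⟨m', hm', hmm'⟩ := aux_S F hF hT' hp' hVo hVy hm
    have hm'B := hRBi hm'
    have hmm'B := hRBi hmm'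
    rw [hBieq] at hm'B hmm'B
    set u := Int.fract (((m + m' : ℕ) : ℝ) * α) with hu
    set v := Int.fract ((m' : ℝ) * α) with hv
    have huv1 : (i : ℝ) * δ ≤ u ∧ u < ((i : ℝ) + 1) * δ := hmm'B.2.2
    have huv2 : (i : ℝ) * δ ≤ v ∧ v < ((i : ℝ) + 1) * δ := hm'B.2.2
    have hdiff : |u - v| < δ := by
      rw [abs_sub_lt_iff]
      constructor <;> nlinarith [huv1.1, huv1.2, huv2.1, huv2.2]
    -- `fract (mα) = fract (u - v)`
    have hkey : Int.fract ((m : ℝ) * α) = Int.fract (u - v) := by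
      have h1 : (m : ℝ) * α = (u - v) + ((⌊((m + m' : ℕ) : ℝ) * α⌋ - ⌊(m' : ℝ) * α⌋ : ℤ) : ℝ) := by
        have e1 : (((m + m' : ℕ) : ℝ)) * α = (⌊((m + m' : ℕ) : ℝ) * α⌋ : ℝ) + u :=
          (Int.floor_add_fract _).symm
        have e2 : ((m' : ℝ)) * α = (⌊(m' : ℝ) * α⌋ : ℝ) + v :=
          (Int.floor_add_fract _).symm
        push_cast at e1 e2 ⊢
        linarith
      rw [h1, Int.fract_add_intCast]
    rcases le_or_gt v u with hcase | hcase
    · left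
      have h0 : 0 ≤ u - v := by linarith
      have h1 : u - v < 1 := by
        have := abs_lt.mp hdiff
        have hδ1 : δ ≤ 1 := by
          rw [hδdef]
          have : (1 : ℝ) ≤ K := by exact_mod_cast hK
          rw [div_le_one (by linarith)]; linarith
        linarith [this.2]
      rw [hkey, Int.fract_eq_self.mpr ⟨h0, h1⟩]
      have := abs_lt.mp hdiff
      linarith [this.2]
    · right
      have h1 : Int.fract (u - v) = u - v + 1 := by
        have hδ1 : δ ≤ 1 := by
          rw [hδdef]
          have : (1 : ℝ) ≤ K := by exact_mod_cast hK
          rw [div_le_one (by linarith)]; linarith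
        have habs := abs_lt.mp hdiff
        have hself : Int.fract (u - v + 1) = u - v + 1 :=
          Int.fract_eq_self.mpr ⟨by linarith [habs.1], by linarith⟩
        have e : Int.fract (u - v) = Int.fract (u - v + 1) := by
          rw [show u - v + 1 = (u - v) + ((1 : ℤ) : ℝ) by push_cast; ring, Int.fract_add_intCast]
        rw [e, hself]
      rw [hkey, h1]
      have := abs_lt.mp hdiff
      linarith [this.1]

end Aux

/-- Proposition 3.6: if `ess(F)` has the Ramsey property and the spectra `g_{α,γ}` map
essential `F`-sets into `F`, then strong `F`-proximality lifts to the suspension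
`(Y, F_{α⁻¹})` at every level `0 < γ < 1`. -/
theorem spectra_preservation_implies_suspension_lift (F : Set (Set ℕ))
    (hF : IsFurstenbergFamily F)
    (hR : HasRamseyProperty {A : Set ℕ | IsEssentialSet F A}) (α : ℝ) (hα : 0 < α)
    (hpres : ∀ A : Set ℕ, IsEssentialSet F A → ∀ γ : ℝ, 0 < γ → γ < 1 → gImage α γ A ∈ F) :
    ∀ (X : Type) (_ : MetricSpace X) (_ : CompactSpace X) (T : X → X),
      IsHomeomorph T → ∀ x y : X, StronglyProximal F T x y →
        ∀ γ : ℝ, 0 < γ → γ < 1 → SuspensionProximal F T x y α γ := by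
  intro X mX cX T hT x y hprox γ hγ0 hγ1 U hU ε hε0 hεm
  have hεγ : ε < γ := lt_of_lt_of_le hεm (min_le_left _ _)
  have hεγ' : ε < 1 - γ := lt_of_lt_of_le hεm (min_le_right _ _)
  -- choose the partition size
  obtain ⟨K, hKgt⟩ := exists_nat_gt (max 2 (1 / (α * ε)))
  have hK2 : (2 : ℝ) < K := lt_of_le_of_lt (le_max_left _ _) hKgt
  have hKinv : 1 / (α * ε) < (K : ℝ) := lt_of_le_of_lt (le_max_right _ _) hKgt
  have hK0 : (0 : ℝ) < K := by linarith
  have hKpos : 0 < K := by exact_mod_cast hK0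
  set δ : ℝ := 1 / K with hδdef
  have hδ0 : 0 < δ := by positivity
  have hδhalf : δ < 1 / 2 := by
    rw [hδdef, div_lt_div_iff₀ hK0 (by norm_num)]; linarith
  have hδαε : δ < α * ε := by
    rw [hδdef, div_lt_iff₀ hK0]
    have hαε : 0 < α * ε := by positivity
    calc (1 : ℝ) = (1 / (α * ε)) * (α * ε) := by field_simp
      _ < (K : ℝ) * (α * ε) := by nlinarith
      _ = α * ε * K := by ring
  -- the return-time set of the pair is essential
  have hAess : IsEssentialSet F (retTimes2 T x y U) :=
    ⟨X, mX, cX, T, hT.continuous, x, y, hprox, U, hU, subset_rfl⟩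
  obtain ⟨R, hRess, hRA, hRprop⟩ := aux_bohr F hF hR α hα hAess K hKpos
  have hRF : gImage α (1/2) R ∈ F := hpres R hRess (1/2) (by norm_num) (by norm_num)
  refine hF.2.2 _ _ hRF ?_
  rintro n ⟨m, hmR, rfl⟩
  obtain ⟨hge1, hfrac⟩ := hRprop m hmR
  have hmA : m ∈ retTimes2 T x y U := hRA hmR
  set f := Int.fract ((m : ℝ) * α) with hfdef
  set N := ⌊(m : ℝ) * α⌋ with hNdef
  have hNf : ((N : ℝ)) + f = (m : ℝ) * α := Int.floor_add_fract _
  have hf0 : 0 ≤ f := Int.fract_nonneg _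
  have hf1 : f < 1 := Int.fract_lt_one _
  have hN1 : (1 : ℤ) ≤ N := Int.le_floor.mpr (by exact_mod_cast hge1)
  have hα' : α ≠ 0 := ne_of_gt hα
  rcases hfrac with hf | hf
  · -- fractional part of `mα` close to 0 : `gFun α (1/2) m = N`
    have hfloor12 : ⌊(m : ℝ) * α + 1/2⌋ = N := by
      have he : (m : ℝ) * α + 1/2 = (N : ℝ) + (f + 1/2) := by linarith
      rw [he, Int.floor_intCast_add]
      have : ⌊f + 1/2⌋ = 0 := by
        apply Int.floor_eq_zero_iff.mpr
        simp only [Set.mem_Ico]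
        constructor <;> linarith
      omega
    have hgval : gFun α (1/2) m = N.toNat := by
      simp only [gFun, hfloor12]
    have hncast : ((gFun α (1/2) m : ℕ) : ℝ) = (N : ℝ) := by
      rw [hgval]
      exact_mod_cast congrArg (Int.cast : ℤ → ℝ) (Int.toNat_of_nonneg (by omega))
    have hfα : f / α < ε := by
      rw [div_lt_iff₀ hα]
      calc f < δ := hf
        _ < α * ε := hδαε
        _ = ε * α := by ring
    have hfα0 : 0 ≤ f / α := by positivity
    have hval : ((gFun α (1/2) m : ℕ) : ℝ) / α + γ = (m : ℝ) + (γ - f / α) := by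
      rw [hncast]
      have : (N : ℝ) = (m : ℝ) * α - f := by linarith
      rw [this]
      field_simp
      ring
    have hfloorfin : ⌊((gFun α (1/2) m : ℕ) : ℝ) / α + γ⌋ = (m : ℤ) := by
      rw [hval]
      apply Int.floor_eq_iff.mpr
      constructor
      · push_cast; linarith
      · push_cast; linarith
    refine ⟨?_, ?_, ?_, ?_, ?_⟩
    · rw [hgval]; omega
    · rw [hfloorfin]
      simp only [Int.toNat_natCast]
      exact hmA.2.1
    · rw [hfloorfin]
      simp only [Int.toNat_natCast]
      exact hmA.2.2
    · rw [hfloorfin, hval]; push_cast; linarith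
    · rw [hfloorfin, hval]; push_cast; linarith
  · -- fractional part of `mα` close to 1 : `gFun α (1/2) m = N + 1`
    have hfhalf : 1/2 < f := by linarith
    have hfloor12 : ⌊(m : ℝ) * α + 1/2⌋ = N + 1 := by
      have he : (m : ℝ) * α + 1/2 = (N : ℝ) + (f + 1/2) := by linarith
      rw [he, Int.floor_intCast_add]
      have : ⌊f + 1/2⌋ = 1 := by
        apply Int.floor_eq_iff.mpr
        constructor
        · push_cast; linarith
        · push_cast; linarith
      omega
    have hgval : gFun α (1/2) m = (N + 1).toNat := by
      simp only [gFun, hfloor12]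
    have hncast : ((gFun α (1/2) m : ℕ) : ℝ) = (N : ℝ) + 1 := by
      rw [hgval]
      have : (((N + 1).toNat : ℤ) : ℝ) = ((N + 1 : ℤ) : ℝ) := by
        exact_mod_cast congrArg (Int.cast : ℤ → ℝ) (Int.toNat_of_nonneg (by omega))
      push_cast at this ⊢
      linarith
    have h1f : 0 < 1 - f := by linarith
    have h1fδ : 1 - f < δ := by linarith
    have hfα : (1 - f) / α < ε := by
      rw [div_lt_iff₀ hα]
      calc 1 - f < δ := h1fδ
        _ < α * ε := hδαε
        _ = ε * α := by ring
    have hfα0 : 0 < (1 - f) / α := by positivity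
    have hval : ((gFun α (1/2) m : ℕ) : ℝ) / α + γ = (m : ℝ) + (γ + (1 - f) / α) := by
      rw [hncast]
      have : (N : ℝ) + 1 = (m : ℝ) * α + (1 - f) := by linarith
      rw [this]
      field_simp
      ring
    have hfloorfin : ⌊((gFun α (1/2) m : ℕ) : ℝ) / α + γ⌋ = (m : ℤ) := by
      rw [hval]
      apply Int.floor_eq_iff.mpr
      constructor
      · push_cast; linarith
      · push_cast; linarith
    refine ⟨?_, ?_, ?_, ?_, ?_⟩
    · rw [hgval]; omega
    · rw [hfloorfin]
      simp only [Int.toNat_natCast]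
      exact hmA.2.1
    · rw [hfloorfin]
      simp only [Int.toNat_natCast]
      exact hmA.2.2
    · rw [hfloorfin, hval]; push_cast; linarith
    · rw [hfloorfin, hval]; push_cast; linarith
end

section
/- If F is a translation + invariant Furstenberg family on ℕ with the Ramsey property, then the collection ess(F) of essential F-sets has the Ramsey property: whenever A ∪ B is an essential F-set, either A or B is an essential F-set. -/
open Set Filter Topology

attribute [local instance] Ultrafilter.add

attribute [local instance] Ultrafilter.addSemigroup

private lemma ultra_mem_add (p q : Ultrafilter ℕ) (s : Set ℕ) :
    s ∈ p + q ↔ {n : ℕ | {m : ℕ | n + m ∈ s} ∈ q} ∈ p := Iff.rfl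

/-- From any filter all of whose members lie in a Ramsey family `F`, one can extract an
ultrafilter finer than it all of whose members lie in `F`. -/
private lemma exists_ultrafilter_le_of_ramsey (F : Set (Set ℕ))
    (hne : ∀ A ∈ F, A.Nonempty)
    (hup : ∀ A B : Set ℕ, A ∈ F → A ⊆ B → B ∈ F)
    (hR : HasRamseyProperty F)
    (G : Filter ℕ) (hG : ∀ s ∈ G, s ∈ F) :
    ∃ p : Ultrafilter ℕ, ↑p ≤ G ∧ ∀ s ∈ p, s ∈ F := by
  classical
  obtain ⟨m, hmS, hmin⟩ : ∃ m : Filter ℕ, (m ≤ G ∧ ∀ s ∈ m, s ∈ F) ∧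
      ∀ b : Filter ℕ, (b ≤ G ∧ ∀ s ∈ b, s ∈ F) → b ≤ m → m ≤ b := by
    obtain ⟨m, hm⟩ := zorn_le₀ (α := (Filter ℕ)ᵒᵈ)
      {H : (Filter ℕ)ᵒᵈ | OrderDual.ofDual H ≤ G ∧ ∀ s ∈ OrderDual.ofDual H, s ∈ F}
      (by
      intro c hc hchain
      rcases c.eq_empty_or_nonempty with rfl | hcne
      · exact ⟨OrderDual.toDual G, ⟨le_refl G, hG⟩, by simp⟩
      · have hdir : Directed (· ≥ ·) (fun H : c => (OrderDual.ofDual H.1 : Filter ℕ)) := by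
          intro a b
          rcases hchain.total a.2 b.2 with hab | hab
          · exact ⟨b, hab, le_refl _⟩
          · exact ⟨a, le_refl _, hab⟩
        haveI : Nonempty c := hcne.to_subtype
        set m₀ : Filter ℕ := ⨅ H : c, (OrderDual.ofDual H.1 : Filter ℕ) with hm₀
        have hmem : ∀ s : Set ℕ, s ∈ m₀ ↔ ∃ H : c, s ∈ (OrderDual.ofDual H.1 : Filter ℕ) :=
          fun s => Filter.mem_iInf_of_directed hdir s
        obtain ⟨H₀, hH₀⟩ := hcne
        refine ⟨OrderDual.toDual m₀, ⟨?_, ?_⟩, ?_⟩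
        · exact le_trans (iInf_le _ ⟨H₀, hH₀⟩) (hc hH₀).1
        · intro s hs
          obtain ⟨H, hsH⟩ := (hmem s).mp hs
          exact (hc H.2).2 s hsH
        · intro z hz
          exact iInf_le (fun H : c => (OrderDual.ofDual H.1 : Filter ℕ)) ⟨z, hz⟩)
    exact ⟨OrderDual.ofDual m, hm.1, fun b hb hbm => hm.2 hb hbm⟩
  have hNeBot : m.NeBot := by
    refine ⟨fun hbot => ?_⟩
    have : (∅ : Set ℕ) ∈ m := by rw [hbot]; exact Filter.mem_bot
    exact Set.not_nonempty_empty (hne _ (hmS.2 _ this))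
  have key : ∀ B : Set ℕ, B ∈ m ∨ Bᶜ ∈ m := by
    intro B
    have hcases : (∀ s ∈ m, s ∩ B ∈ F) ∨ (∀ s ∈ m, s ∩ Bᶜ ∈ F) := by
      by_contra h
      push_neg at h
      obtain ⟨⟨s₁, hs₁m, hs₁⟩, ⟨s₂, hs₂m, hs₂⟩⟩ := h
      have hsF : s₁ ∩ s₂ ∈ F := hmS.2 _ (Filter.inter_mem hs₁m hs₂m)
      have hsplit : ((s₁ ∩ s₂) ∩ B) ∪ ((s₁ ∩ s₂) ∩ Bᶜ) ∈ F := by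
        refine hup _ _ hsF ?_
        intro x hx
        by_cases hxB : x ∈ B
        · exact Or.inl ⟨hx, hxB⟩
        · exact Or.inr ⟨hx, hxB⟩
      rcases hR _ _ hsplit with h' | h'
      · exact hs₁ (hup _ _ h' fun x hx => ⟨hx.1.1, hx.2⟩)
      · exact hs₂ (hup _ _ h' fun x hx => ⟨hx.1.2, hx.2⟩)
    have step : ∀ B : Set ℕ, (∀ s ∈ m, s ∩ B ∈ F) → B ∈ m := by
      intro B hc
      have hHS : (m ⊓ Filter.principal B) ≤ G ∧ ∀ t ∈ m ⊓ Filter.principal B, t ∈ F := by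
        refine ⟨le_trans inf_le_left hmS.1, ?_⟩
        intro t ht
        obtain ⟨t₁, ht₁, t₂, ht₂, hsub⟩ := Filter.mem_inf_iff_superset.mp ht
        refine hup _ _ (hc t₁ ht₁) ?_
        intro x hx
        exact hsub ⟨hx.1, Filter.mem_principal.mp ht₂ hx.2⟩
      have := hmin _ hHS inf_le_left
      exact this (Filter.mem_inf_of_right (Filter.mem_principal_self B))
    rcases hcases with hc | hc
    · exact Or.inl (step B hc)
    · exact Or.inr (step Bᶜ hc)
  have hiff : ∀ s : Set ℕ, sᶜ ∉ m ↔ s ∈ m := by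
    intro s
    constructor
    · intro h
      rcases key s with h' | h'
      · exact h'
      · exact absurd h' h
    · intro hs hcs
      have : s ∩ sᶜ ∈ m := Filter.inter_mem hs hcs
      rw [Set.inter_compl_self] at this
      exact Set.not_nonempty_empty (hne _ (hmS.2 _ this))
  refine ⟨Ultrafilter.ofComplNotMemIff m hiff, hmS.1, hmS.2⟩

/-- Any member of an idempotent ultrafilter that avoids `0`, all of whose members lie
in `F`, is an essential `F`-set (via the shift on `ℕ → Bool`). -/
private lemma essential_of_idem (F : Set (Set ℕ))
    (hne : ∀ A ∈ F, A.Nonempty)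
    (hup : ∀ A B : Set ℕ, A ∈ F → A ⊆ B → B ∈ F)
    (p : Ultrafilter ℕ) (hidem : p + p = p) (hpF : ∀ s ∈ p, s ∈ F)
    (hpos : {n : ℕ | 0 < n} ∈ p) (A : Set ℕ) (hA : A ∈ p) :
    IsEssentialSet F A := by
  classical
  set σ : (ℕ → Bool) → (ℕ → Bool) := fun z i => z (i + 1) with hσ
  have hσc : Continuous σ := continuous_pi fun i => continuous_apply (i + 1)
  have hit : ∀ (n : ℕ) (z : ℕ → Bool) (i : ℕ), σ^[n] z i = z (i + n) := by
    intro n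
    induction n with
    | zero => intro z i; rfl
    | succ n ih =>
      intro z i
      rw [Function.iterate_succ_apply, ih (σ z) i]
      rfl
  set ω : ℕ → Bool := fun n => decide (n ∈ A) with hω
  set y : ℕ → Bool := fun i => decide ({n : ℕ | ω (i + n) = true} ∈ p) with hy
  have hS1 : ∀ i, {n : ℕ | ω (i + n) = y i} ∈ p := by
    intro i
    by_cases h : {n : ℕ | ω (i + n) = true} ∈ p
    · have hyi : y i = true := by simp [hy, h]
      rw [hyi]; exact h
    · have hyi : y i = false := by simp [hy, h]
      rw [hyi]
      have hcompl : {n : ℕ | ω (i + n) = true}ᶜ ∈ p := Ultrafilter.compl_mem_iff_notMem.mpr h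
      refine Filter.mem_of_superset hcompl ?_
      intro n hn
      simpa using hn
  have hdetect : ∀ (j : ℕ) (b : Bool), {m : ℕ | ω (j + m) = b} ∈ p → y j = b := by
    intro j b hb
    cases b with
    | true => simp only [hy]; simp only [decide_eq_true_iff]; exact hb
    | false =>
      simp only [hy, decide_eq_false_iff_not]
      intro htrue
      have : {m : ℕ | ω (j + m) = false} ∩ {m : ℕ | ω (j + m) = true} ∈ p :=
        Filter.inter_mem hb htrue
      obtain ⟨m, hm1, hm2⟩ := Ultrafilter.nonempty_of_mem this
      have h1 : ω (j + m) = false := hm1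
      have h2 : ω (j + m) = true := hm2
      rw [h1] at h2; exact Bool.false_ne_true h2
  have hS2 : ∀ i, {n : ℕ | y (i + n) = y i} ∈ p := by
    intro i
    have hadd : {n : ℕ | {m : ℕ | n + m ∈ {k : ℕ | ω (i + k) = y i}} ∈ p} ∈ p := by
      have := (ultra_mem_add p p {k : ℕ | ω (i + k) = y i}).mp (by rw [hidem]; exact hS1 i)
      exact this
    refine Filter.mem_of_superset hadd ?_
    intro n hn
    refine hdetect (i + n) (y i) ?_
    refine Filter.mem_of_superset hn ?_
    intro m hm
    have : ω (i + (n + m)) = y i := hm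
    rwa [← add_assoc] at this
  have hSP : StronglyProximal F σ ω y := by
    intro V hV
    rw [nhds_pi] at hV
    obtain ⟨I, hIfin, t, ht, hsub⟩ := Filter.mem_pi.mp hV
    have hcyl : ∀ z : ℕ → Bool, (∀ i ∈ I, z i = y i) → z ∈ V := by
      intro z hz
      apply hsub
      intro i hi
      rw [hz i hi]
      exact mem_of_mem_nhds (ht i)
    have hmem : ({n : ℕ | 0 < n} ∩
        ⋂ i ∈ I, ({n : ℕ | ω (i + n) = y i} ∩ {n : ℕ | y (i + n) = y i})) ∈ p := by
      refine Filter.inter_mem hpos ?_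
      exact (Filter.biInter_mem hIfin).mpr fun i _ => Filter.inter_mem (hS1 i) (hS2 i)
    refine hup _ _ (hpF _ hmem) ?_
    rintro n ⟨hn0, hnI⟩
    refine ⟨hn0, hcyl _ ?_, hcyl _ ?_⟩
    · intro i hi
      rw [hit n ω i]
      exact (Set.mem_iInter₂.mp hnI i hi).1
    · intro i hi
      rw [hit n y i]
      exact (Set.mem_iInter₂.mp hnI i hi).2
  have hy0 : y 0 = true := by
    refine hdetect 0 true ?_
    refine Filter.mem_of_superset hA ?_
    intro n hn
    simp only [Set.mem_setOf_eq, hω, Nat.zero_add, decide_eq_true_iff]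
    exact hn
  letI mX : MetricSpace (ℕ → Bool) := TopologicalSpace.metrizableSpaceMetric (ℕ → Bool)
  refine ⟨ℕ → Bool, mX, ?_, σ, ?_, ω, y, ?_, {z : ℕ → Bool | z 0 = true}, ?_, ?_⟩
  · exact inferInstance
  · exact hσc
  · exact hSP
  · have hcont0 : Continuous (fun z : ℕ → Bool => z 0) := continuous_apply 0
    have hopen : IsOpen {z : ℕ → Bool | z 0 = true} :=
      hcont0.isOpen_preimage ({true} : Set Bool) (isOpen_discrete _)
    exact hopen.mem_nhds hy0
  · rintro n ⟨hn0, hnx, -⟩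
    have : ω (0 + n) = true := by rw [← hit n ω 0]; exact hnx
    rw [Nat.zero_add] at this
    simpa [hω] using this

/-- Corollary 3.8: if `F` is a translation `+` invariant Furstenberg family with the Ramsey
property, then `ess(F)` has the Ramsey property. -/
theorem essentialSets_ramsey (F : Set (Set ℕ)) (hF : IsFurstenbergFamily F)
    (hTI : TranslationInvariant F) (hR : HasRamseyProperty F) :
    HasRamseyProperty {A : Set ℕ | IsEssentialSet F A} := by
  obtain ⟨-, hne, hup⟩ := hF
  intro A B hAB
  obtain ⟨X, mX, cX, T, hT, x, y, hSP, U, hU, hUsub⟩ := hAB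
  classical
  set G : Filter ℕ := (nhds y).lift' (fun V => retTimes2 T x y V) with hGdef
  have hmono : Monotone (fun V : Set X => retTimes2 T x y V) := by
    intro V W hVW n hn
    exact ⟨hn.1, hVW hn.2.1, hVW hn.2.2⟩
  have hmemG : ∀ s : Set ℕ, s ∈ G ↔ ∃ V ∈ nhds y, retTimes2 T x y V ⊆ s := fun s =>
    Filter.mem_lift'_sets hmono
  have hGF : ∀ s ∈ G, s ∈ F := by
    intro s hs
    obtain ⟨V, hV, hVs⟩ := (hmemG s).mp hs
    exact hup _ _ (hSP V hV) hVs
  set C : Set (Ultrafilter ℕ) := {p | ↑p ≤ G ∧ ∀ s ∈ p, s ∈ F} with hCdef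
  have hCne : C.Nonempty := by
    obtain ⟨p, h1, h2⟩ := exists_ultrafilter_le_of_ramsey F hne hup hR G hGF
    exact ⟨p, h1, h2⟩
  have hCclosed : IsClosed C := by
    have hCeq : C = (⋂ t ∈ {t : Set ℕ | t ∈ G}, {p : Ultrafilter ℕ | t ∈ p}) ∩
        ⋂ s ∈ {s : Set ℕ | s ∉ F}, {p : Ultrafilter ℕ | s ∈ p}ᶜ := by
      ext p
      simp only [hCdef, Set.mem_setOf_eq, Set.mem_inter_iff, Set.mem_iInter,
        Set.mem_compl_iff]
      constructor
      · rintro ⟨h1, h2⟩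
        exact ⟨fun t ht => h1 ht, fun s hs hsp => hs (h2 s hsp)⟩
      · rintro ⟨h1, h2⟩
        refine ⟨fun t ht => h1 t ht, fun s hsp => ?_⟩
        by_contra hsF
        exact h2 s hsF hsp
    rw [hCeq]
    refine IsClosed.inter ?_ ?_
    · exact isClosed_biInter fun t _ => ultrafilter_isClosed_basic t
    · exact isClosed_biInter fun s _ => (ultrafilter_isOpen_basic s).isClosed_compl
  have hCadd : ∀ p ∈ C, ∀ q ∈ C, p + q ∈ C := by
    rintro p ⟨hpG, hpF⟩ q ⟨hqG, hqF⟩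
    constructor
    · intro t ht
      obtain ⟨V, hV, hVt⟩ := (hmemG t).mp ht
      have hVo : interior V ∈ nhds y := interior_mem_nhds.mpr hV
      show {n : ℕ | {m : ℕ | n + m ∈ t} ∈ q} ∈ p
      have hNp : retTimes2 T x y (interior V) ∈ p :=
        hpG ((hmemG _).mpr ⟨interior V, hVo, le_refl _⟩)
      refine Filter.mem_of_superset hNp ?_
      rintro n ⟨hn0, hnx, hny⟩
      have hcont : Continuous (T^[n]) := hT.iterate n
      have hW : (T^[n]) ⁻¹' (interior V) ∈ nhds y :=
        hcont.continuousAt.preimage_mem_nhds (isOpen_interior.mem_nhds hny)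
      have hNq : retTimes2 T x y ((T^[n]) ⁻¹' (interior V)) ∈ q :=
        hqG ((hmemG _).mpr ⟨_, hW, le_refl _⟩)
      refine Filter.mem_of_superset hNq ?_
      rintro m ⟨hm0, hmx, hmy⟩
      apply hVt
      refine ⟨by omega, ?_, ?_⟩
      · rw [Function.iterate_add_apply]
        exact interior_subset hmx
      · rw [Function.iterate_add_apply]
        exact interior_subset hmy
    · intro s hs
      have hs' : {n : ℕ | {m : ℕ | n + m ∈ s} ∈ q} ∈ p := hs
      obtain ⟨n₀, hn₀⟩ := Ultrafilter.nonempty_of_mem hs'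
      have hBF : {m : ℕ | n₀ + m ∈ s} ∈ F := hqF _ hn₀
      refine hup _ _ (hTI n₀ _ hBF) ?_
      rintro z ⟨m, hm, rfl⟩
      exact hm
  obtain ⟨p, hpC, hpp⟩ := exists_idempotent_in_compact_add_subsemigroup
    Ultrafilter.continuous_add_left C hCne hCclosed.isCompact hCadd
  have hNU : retTimes2 T x y U ∈ p := hpC.1 ((hmemG _).mpr ⟨U, hU, le_refl _⟩)
  have hABp : A ∪ B ∈ p := Filter.mem_of_superset hNU hUsub
  have hposp : {n : ℕ | 0 < n} ∈ p := Filter.mem_of_superset hNU fun n hn => hn.1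
  rcases Ultrafilter.union_mem_iff.mp hABp with h | h
  · exact Or.inl (essential_of_idem F hne hup p hpp hpC.2 hposp A h)
  · exact Or.inr (essential_of_idem F hne hup p hpp hpC.2 hposp B h)
end

section
/- If A ⊆ ℕ has positive upper Banach density, then for every α > 0 and every 0 < γ < 1 the set g_{α,γ}(A) = {⌊nα + γ⌋ : n ∈ A} has positive upper Banach density. -/
open Set Filter Topology

attribute [local instance] Ultrafilter.add

section auxx
variable {α γ : ℝ}

lemma gFun_mono (hα : 0 < α) : Monotone (gFun α γ) := by
  intro a b hab
  unfold gFun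
  apply Int.toNat_le_toNat
  apply Int.floor_le_floor
  have : (a:ℝ) * α ≤ (b:ℝ) * α := by
    apply mul_le_mul_of_nonneg_right _ hα.le
    exact_mod_cast hab
  linarith

lemma gFun_add_le (hα : 0 < α) (hγ : 0 ≤ γ) (m L : ℕ) :
    gFun α γ (m + L) ≤ gFun α γ m + ⌈(L:ℝ) * α⌉₊ := by
  unfold gFun
  rw [Int.toNat_le]
  have h0 : (0:ℝ) ≤ (m:ℝ) * α + γ := by positivity
  have h1 : ((⌊(m:ℝ) * α + γ⌋).toNat : ℤ) = ⌊(m:ℝ) * α + γ⌋ :=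
    Int.toNat_of_nonneg (Int.floor_nonneg.mpr h0)
  push_cast
  rw [h1, Int.natCast_ceil_eq_ceil (by positivity)]
  have he : ((m:ℝ) + L) * α + γ = ((m:ℝ) * α + γ) + (L:ℝ) * α := by ring
  rw [he, Int.floor_le_iff]
  push_cast
  linarith [Int.lt_floor_add_one ((m:ℝ) * α + γ), Int.le_ceil ((L:ℝ) * α)]

/-- fibers of gFun have size at most ⌈1/α⌉₊ -/
lemma gFun_fiber (hα : 0 < α) (hγ : 0 ≤ γ) {a b : ℕ} (hab : a ≤ b)
    (h : gFun α γ a = gFun α γ b) : b - a < ⌈1/α⌉₊ := by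
  have hfa : (0:ℤ) ≤ ⌊(a:ℝ) * α + γ⌋ := Int.floor_nonneg.mpr (by positivity)
  have hfb : (0:ℤ) ≤ ⌊(b:ℝ) * α + γ⌋ := Int.floor_nonneg.mpr (by positivity)
  have hfe : ⌊(a:ℝ) * α + γ⌋ = ⌊(b:ℝ) * α + γ⌋ := by
    unfold gFun at h; omega
  have h2 : (b:ℝ) * α + γ < ⌊(a:ℝ) * α + γ⌋ + 1 := by
    rw [hfe]; exact Int.lt_floor_add_one _
  have h3 : ((b:ℝ) - a) * α < 1 := by
    have := Int.floor_le ((a:ℝ) * α + γ)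
    nlinarith
  have h4 : ((b - a : ℕ) : ℝ) < 1 / α := by
    rw [lt_div_iff₀ hα]
    have : ((b - a : ℕ) : ℝ) = (b:ℝ) - a := by
      push_cast [Nat.cast_sub hab]; ring
    rw [this]; exact h3
  exact Nat.lt_ceil.mpr h4

/-- key counting lemma -/
lemma key_count (A : Set ℕ) (hα : 0 < α) (hγ0 : 0 < γ) (m L : ℕ) :
    (A ∩ Set.Icc m (m + L)).ncard ≤
      ⌈1/α⌉₊ * ((gImage α γ A ∩
        Set.Icc (gFun α γ m) (gFun α γ m + (⌈(L:ℝ) * α⌉₊ + 1))).ncard) := by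
  classical
  set C := ⌈1/α⌉₊ with hCdef
  set s : Finset ℕ := (Finset.Icc m (m + L)).filter (· ∈ A) with hs
  have hset : A ∩ Set.Icc m (m + L) = ↑s := by
    ext n; simp [hs, and_comm]
  rw [hset, Set.ncard_coe_finset]
  set t := s.image (gFun α γ) with ht
  have hsub : ↑t ⊆ gImage α γ A ∩
      Set.Icc (gFun α γ m) (gFun α γ m + (⌈(L:ℝ) * α⌉₊ + 1)) := by
    intro u hu
    simp only [ht, Finset.coe_image, Set.mem_image, Finset.mem_coe] at hu
    obtain ⟨n, hn, rfl⟩ := hu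
    simp only [hs, Finset.mem_filter, Finset.mem_Icc] at hn
    constructor
    · exact ⟨n, hn.2, rfl⟩
    · constructor
      · exact gFun_mono hα hn.1.1
      · calc gFun α γ n ≤ gFun α γ (m + L) := gFun_mono hα hn.1.2
          _ ≤ gFun α γ m + ⌈(L:ℝ) * α⌉₊ := gFun_add_le hα hγ0.le m L
          _ ≤ _ := by omega
  have hfin : (gImage α γ A ∩
      Set.Icc (gFun α γ m) (gFun α γ m + (⌈(L:ℝ) * α⌉₊ + 1))).Finite :=
    (Set.finite_Icc _ _).inter_of_right _
  have h1 : t.card ≤ (gImage α γ A ∩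
      Set.Icc (gFun α γ m) (gFun α γ m + (⌈(L:ℝ) * α⌉₊ + 1))).ncard := by
    rw [← Set.ncard_coe_finset]
    exact Set.ncard_le_ncard hsub hfin
  have h2 : s.card ≤ C * t.card := by
    apply Finset.card_le_mul_card_image
    intro v _
    set u := s.filter (fun x => gFun α γ x = v) with hu
    rcases u.eq_empty_or_nonempty with he | hne
    · simp [he]
    · set n0 := u.min' hne with hn0
      have hsubu : u ⊆ Finset.Ico n0 (n0 + C) := by
        intro n hn
        have h5 : n0 ≤ n := u.min'_le n hn
        have h6 : gFun α γ n = v := (Finset.mem_filter.mp hn).2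
        have h7 : gFun α γ n0 = v := (Finset.mem_filter.mp (u.min'_mem hne)).2
        have := gFun_fiber hα hγ0.le h5 (h7.trans h6.symm)
        simp only [Finset.mem_Ico]
        omega
      calc u.card ≤ (Finset.Ico n0 (n0 + C)).card := Finset.card_le_card hsubu
        _ = C := by simp
  calc s.card ≤ C * t.card := h2
    _ ≤ _ := Nat.mul_le_mul_left C h1

end auxx


-- analytic helpers
lemma pubd_f_le_one (B : Set ℕ) (L m : ℕ) :
    ((B ∩ Set.Icc m (m + L)).ncard : ℝ) / (L + 1) ≤ 1 := by
  rw [div_le_one (by positivity)]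
  have h1 : (B ∩ Set.Icc m (m + L)).ncard ≤ (Set.Icc m (m + L)).ncard :=
    Set.ncard_le_ncard Set.inter_subset_right (Set.finite_Icc _ _)
  have h2 : (Set.Icc m (m + L)).ncard = L + 1 := by
    rw [Set.ncard_eq_toFinset_card']
    simp [Nat.card_Icc]; omega
  rw [h2] at h1
  exact_mod_cast h1

lemma pubd_bdd (B : Set ℕ) (L : ℕ) :
    BddAbove (Set.range fun m => ((B ∩ Set.Icc m (m + L)).ncard : ℝ) / (L + 1)) := by
  refine ⟨1, ?_⟩
  rintro x ⟨m, rfl⟩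
  exact pubd_f_le_one B L m

lemma pubd_S_le_one (B : Set ℕ) (L : ℕ) :
    (⨆ m : ℕ, ((B ∩ Set.Icc m (m + L)).ncard : ℝ) / (L + 1)) ≤ 1 :=
  ciSup_le (pubd_f_le_one B L)

lemma pubd_S_nonneg (B : Set ℕ) (L : ℕ) :
    0 ≤ ⨆ m : ℕ, ((B ∩ Set.Icc m (m + L)).ncard : ℝ) / (L + 1) :=
  Real.iSup_nonneg fun m => by positivity

/-- If `A ⊆ ℕ` has positive upper Banach density, then so does `g_{α,γ}(A)` for all
`α > 0` and `0 < γ < 1`. -/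
theorem pubd_spectra (A : Set ℕ) (hA : 0 < upperBanachDensity A) (α γ : ℝ) (hα : 0 < α)
    (hγ0 : 0 < γ) (hγ1 : γ < 1) : 0 < upperBanachDensity (gImage α γ A) := by
  classical
  set B := gImage α γ A with hB
  set C := ⌈1/α⌉₊ with hC
  have hCpos : 0 < C := Nat.ceil_pos.mpr (by positivity)
  set δ : ℝ := upperBanachDensity A / 2 with hδdef
  have hδ : 0 < δ := by positivity
  have hδlt : δ < upperBanachDensity A := by linarith
  set δ' : ℝ := δ / (C * (α + 3)) with hδ'def
  have hCpos' : (0:ℝ) < C := by exact_mod_cast hCpos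
  have hδ' : 0 < δ' := by
    apply div_pos hδ
    positivity
  -- frequently large averages for A
  have hfreq1 : ∃ᶠ L in atTop, δ <
      ⨆ m : ℕ, ((A ∩ Set.Icc m (m + L)).ncard : ℝ) / (L + 1) := by
    apply frequently_lt_of_lt_limsup
    · exact isCoboundedUnder_le_of_le atTop (fun L => pubd_S_nonneg A L)
    · exact hδlt
  have hfreq2 := hfreq1.and_eventually (eventually_ge_atTop 1)
  -- key step
  have hkey : ∀ L : ℕ, 1 ≤ L →
      (δ < ⨆ m : ℕ, ((A ∩ Set.Icc m (m + L)).ncard : ℝ) / (L + 1)) →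
      δ' ≤ ⨆ m : ℕ, ((B ∩ Set.Icc m (m + (⌈(L:ℝ) * α⌉₊ + 1))).ncard : ℝ)
        / ((⌈(L:ℝ) * α⌉₊ + 1 : ℕ) + 1) := by
    intro L hL1 hSL
    rw [lt_ciSup_iff (pubd_bdd A L)] at hSL
    obtain ⟨m, hm⟩ := hSL
    set M : ℕ := ⌈(L:ℝ) * α⌉₊ + 1 with hM
    set m' := gFun α γ m with hm'
    set N := (A ∩ Set.Icc m (m + L)).ncard with hN
    set N' := (B ∩ Set.Icc m' (m' + M)).ncard with hN'
    have hNlb : δ * (L + 1) < N := by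
      rw [← lt_div_iff₀ (by positivity : (0:ℝ) < (L:ℝ) + 1)]
      exact hm
    have hNN' : (N : ℝ) ≤ C * N' := by
      have := key_count A hα hγ0 m L
      exact_mod_cast this
    have hMub : (M:ℝ) + 1 ≤ (α + 3) * L := by
      have h1 : (⌈(L:ℝ) * α⌉₊ : ℝ) < (L:ℝ) * α + 1 :=
        Nat.ceil_lt_add_one (by positivity)
      have hL1' : (1:ℝ) ≤ L := by exact_mod_cast hL1
      push_cast [hM]
      nlinarith
    have hgoal : δ' ≤ (N' : ℝ) / ((M:ℕ) + 1 : ℝ) := by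
      rw [hδ'def, div_le_div_iff₀ (by positivity) (by positivity)]
      have hb1 : δ * L ≤ (C:ℝ) * N' := by nlinarith [hδ.le]
      nlinarith [mul_le_mul_of_nonneg_left hMub hδ.le,
        mul_le_mul_of_nonneg_left hb1 (show (0:ℝ) ≤ α + 3 by linarith)]
    calc δ' ≤ ((B ∩ Set.Icc m' (m' + M)).ncard : ℝ) / ((M:ℕ) + 1 : ℝ) := hgoal
      _ ≤ _ := le_ciSup (pubd_bdd B M) m'
  have hfreq3 : ∃ᶠ L : ℕ in atTop,
      δ' ≤ ⨆ m : ℕ, ((B ∩ Set.Icc m (m + (⌈(L:ℝ) * α⌉₊ + 1))).ncard : ℝ)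
        / ((⌈(L:ℝ) * α⌉₊ + 1 : ℕ) + 1) :=
    hfreq2.mono fun L h => hkey L h.2 h.1
  have hten : Tendsto (fun L : ℕ => ⌈(L:ℝ) * α⌉₊ + 1) atTop atTop := by
    rw [tendsto_atTop_atTop]
    intro b
    refine ⟨⌈(b:ℝ) / α⌉₊, fun a ha => ?_⟩
    have h1 : (b:ℝ) / α ≤ (⌈(b:ℝ)/α⌉₊ : ℝ) := Nat.le_ceil _
    have h2 : ((⌈(b:ℝ)/α⌉₊ : ℕ) : ℝ) ≤ (a : ℝ) := by exact_mod_cast ha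
    have h3 : (b:ℝ) ≤ (a:ℝ) * α := by
      rw [div_le_iff₀ hα] at h1
      nlinarith
    have h4 : (b:ℝ) ≤ (⌈(a:ℝ) * α⌉₊ : ℝ) := h3.trans (Nat.le_ceil _)
    have h5 : b ≤ ⌈(a:ℝ) * α⌉₊ := by exact_mod_cast h4
    omega
  have hfreq4 : ∃ᶠ M : ℕ in atTop,
      δ' ≤ ⨆ m : ℕ, ((B ∩ Set.Icc m (m + M)).ncard : ℝ) / ((M:ℕ) + 1 : ℝ) := by
    have := Filter.frequently_map
      (m := fun L : ℕ => ⌈(L:ℝ) * α⌉₊ + 1) (f := atTop)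
      (P := fun M : ℕ => δ' ≤ ⨆ m : ℕ,
        ((B ∩ Set.Icc m (m + M)).ncard : ℝ) / ((M:ℕ) + 1 : ℝ))
    exact (this.mpr hfreq3).filter_mono hten
  have hfin : δ' ≤ upperBanachDensity B := by
    apply le_limsup_of_frequently_le
    · exact hfreq4.mono fun M h => by exact_mod_cast h
    · exact isBoundedUnder_of ⟨1, fun L => pubd_S_le_one B L⟩
  linarith
end
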